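/- arXiv:1706.05496 — 3 statements merged into one kernel-verified Lean document; each statement's English description precedes it below -/
import Mathlib

section
/- Let G = (V,E) be the line graph of a bipartite graph. Then xc(STAB(G)) ≤ 2|V|, and xc(STAB(Ḡ)) ≤ 3|V| for the complement Ḡ of G. -/
/-- A polytope is the convex hull of a finite set of points. -/
def IsPolytope {E : Type*} [AddCommGroup E] [Module ℝ E] (P : Set E) : Prop :=
  ∃ F : Set E, F.Finite ∧ P = convexHull ℝ F

/-- An (exposed) face of a set `Q ⊆ ℝ^κ`. -/
def IsExposedFace {κ : Type*} [Fintype κ] (Q F : Set (κ → ℝ)) : Prop :=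
  F ⊆ Q ∧ ∃ (c : κ → ℝ) (α : ℝ), (∀ y ∈ Q, ∑ i, c i * y i ≤ α) ∧
    F = {y ∈ Q | ∑ i, c i * y i = α}

/-- A facet of `Q`: a maximal proper nonempty face of `Q`. -/
def IsFacet {κ : Type*} [Fintype κ] (Q F : Set (κ → ℝ)) : Prop :=
  IsExposedFace Q F ∧ F.Nonempty ∧ F ≠ Q ∧
    ∀ F' : Set (κ → ℝ), IsExposedFace Q F' → F'.Nonempty → F' ≠ Q → F ⊆ F' → F' = F

/-- The size of a polytope: its number of facets. -/
noncomputable def polySize {κ : Type*} [Fintype κ] (Q : Set (κ → ℝ)) : ℕ :=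
  {F : Set (κ → ℝ) | IsFacet Q F}.ncard

/-- `Q` is an extension of `P` if `Q` is a polytope and some linear map sends `Q` onto `P`. -/
def IsExtension {ι κ : Type*} [Fintype ι] [Fintype κ]
    (P : Set (ι → ℝ)) (Q : Set (κ → ℝ)) : Prop :=
  IsPolytope Q ∧ ∃ π : (κ → ℝ) →ₗ[ℝ] (ι → ℝ), π '' Q = P

/-- The extension complexity of `P`: the minimum number of facets of an extension of `P`. -/
noncomputable def xc {ι : Type*} [Fintype ι] (P : Set (ι → ℝ)) : ℕ :=
  sInf {r : ℕ | ∃ (k : ℕ) (Q : Set (Fin k → ℝ)), IsExtension P Q ∧ polySize Q = r}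


/-- The stable set polytope of a graph: the convex hull of the characteristic vectors of
its independent (stable) sets. -/
def stab {V : Type*} [Fintype V] (G : SimpleGraph V) : Set (V → ℝ) :=
  convexHull ℝ {x : V → ℝ |
    ∃ S : Set V, (∀ u ∈ S, ∀ v ∈ S, ¬ G.Adj u v) ∧ x = S.indicator 1}

/-- A graph is bipartite if the vertices split into two parts so that every edge goes
between the parts. -/
def IsBipartite {V : Type*} (G : SimpleGraph V) : Prop :=
  ∃ s : Set V, ∀ ⦃u v⦄, G.Adj u v → (u ∈ s ↔ v ∉ s)

/-- The line graph of a graph `H`: vertices are the edges of `H`, two being adjacent when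
they share an endpoint. -/
def lineGraph {W : Type*} (H : SimpleGraph W) : SimpleGraph H.edgeSet :=
  SimpleGraph.fromRel fun e f => ∃ v : W, v ∈ (e : Sym2 W) ∧ v ∈ (f : Sym2 W)

open Finset

set_option linter.unusedSectionVars false

noncomputable section XCAux

namespace XCAux

variable {κ : Type*} [Fintype κ]

/-- Linear functional given by coefficient vector `c`. -/
def lsum (c x : κ → ℝ) : ℝ := ∑ j, c j * x j

lemma lsum_combo (c x y : κ → ℝ) (a b : ℝ) :
    lsum c (a • x + b • y) = a * lsum c x + b * lsum c y := by
  unfold lsum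
  rw [Finset.mul_sum, Finset.mul_sum, ← Finset.sum_add_distrib]
  refine Finset.sum_congr rfl fun j _ => ?_
  simp only [Pi.add_apply, Pi.smul_apply, smul_eq_mul]
  ring

lemma lsum_ray (c x z : κ → ℝ) (e : ℝ) :
    lsum c (x + e • (x - z)) = lsum c x + e * (lsum c x - lsum c z) := by
  unfold lsum
  have h : ∀ j : κ, c j * ((x + e • (x - z)) j)
      = (c j * x j) + e * ((c j * x j) - (c j * z j)) := by
    intro j
    simp only [Pi.add_apply, Pi.smul_apply, Pi.sub_apply, smul_eq_mul]
    ring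
  rw [Finset.sum_congr rfl fun j _ => h j, Finset.sum_add_distrib, ← Finset.mul_sum,
    Finset.sum_sub_distrib]

lemma lsum_finsum {α : Type*} (c : κ → ℝ) (t : Finset α) (w : α → ℝ) (p : α → κ → ℝ) :
    lsum c (∑ i ∈ t, w i • p i) = ∑ i ∈ t, w i * lsum c (p i) := by
  unfold lsum
  calc ∑ j : κ, c j * (∑ i ∈ t, w i • p i) j
      = ∑ j : κ, ∑ i ∈ t, w i * (c j * p i j) := by
        refine Finset.sum_congr rfl fun j _ => ?_
        rw [Finset.sum_apply, Finset.mul_sum]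
        exact Finset.sum_congr rfl fun i _ => by simp [smul_eq_mul]; ring
    _ = ∑ i ∈ t, ∑ j : κ, w i * (c j * p i j) := Finset.sum_comm
    _ = ∑ i ∈ t, w i * ∑ j : κ, c j * p i j := by
        exact Finset.sum_congr rfl fun i _ => (Finset.mul_sum _ _ _).symm

variable {ι : Type*} [Fintype ι]

/-- The H-polytope given by rows `A` and right-hand sides `b`. -/
def HP (A : ι → κ → ℝ) (b : ι → ℝ) : Set (κ → ℝ) := {x | ∀ i, lsum (A i) x ≤ b i}

lemma convex_HP (A : ι → κ → ℝ) (b : ι → ℝ) : Convex ℝ (HP A b) := by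
  intro x hx y hy a c ha hc hac i
  rw [lsum_combo]
  calc a * lsum (A i) x + c * lsum (A i) y ≤ a * b i + c * b i :=
        add_le_add (mul_le_mul_of_nonneg_left (hx i) ha) (mul_le_mul_of_nonneg_left (hy i) hc)
    _ = b i := by rw [← add_mul, hac, one_mul]

/-- The face of `HP A b` where row `i` is tight. -/
def tface (A : ι → κ → ℝ) (b : ι → ℝ) (i : ι) : Set (κ → ℝ) :=
  {x ∈ HP A b | lsum (A i) x = b i}

lemma tface_exposed (A : ι → κ → ℝ) (b : ι → ℝ) (i : ι) :
    IsExposedFace (HP A b) (tface A b i) :=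
  ⟨fun _ hx => hx.1, A i, b i, fun _ hy => hy i, rfl⟩

lemma convex_face (A : ι → κ → ℝ) (b : ι → ℝ) (c : κ → ℝ) (α : ℝ) :
    Convex ℝ {y ∈ HP A b | lsum c y = α} := by
  intro x hx y hy a d ha hd had
  refine ⟨convex_HP A b hx.1 hy.1 ha hd had, ?_⟩
  rw [lsum_combo, hx.2, hy.2, ← add_mul, had, one_mul]

/-- Every facet of an H-polytope is one of the tight-row faces (for a row that is not
always tight). -/
lemma facet_eq_tface {A : ι → κ → ℝ} {b : ι → ℝ} {F : Set (κ → ℝ)}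
    (hF : IsFacet (HP A b) F) : ∃ i, tface A b i ≠ HP A b ∧ F = tface A b i := by
  classical
  obtain ⟨⟨hFsub, c, α, hbound, hFeq⟩, hne, hprop, hmax⟩ := hF
  have hFeq' : F = {y ∈ HP A b | lsum c y = α} := hFeq
  by_contra hcon
  push_neg at hcon
  have key : ∀ i, (∀ y ∈ HP A b, lsum (A i) y = b i) ∨ ∃ x ∈ F, lsum (A i) x < b i := by
    intro i
    by_cases hq : tface A b i = HP A b
    · exact Or.inl fun y hy => (show y ∈ tface A b i from hq ▸ hy).2
    · right
      by_contra h2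
      push_neg at h2
      have hsub : F ⊆ tface A b i := fun x hx => ⟨hFsub hx, le_antisymm (hFsub hx i) (h2 x hx)⟩
      obtain ⟨x₀, hx₀⟩ := hne
      exact hcon i hq (hmax (tface A b i) (tface_exposed A b i) ⟨x₀, hsub hx₀⟩ hq hsub).symm
  obtain ⟨x₀, hx₀⟩ := hne
  obtain ⟨z, hzQ, hzF⟩ := Set.exists_of_ssubset (hFsub.ssubset_of_ne hprop)
  have hzlt : lsum c z < α := by
    refine lt_of_le_of_ne (hbound z hzQ) fun h => hzF ?_
    rw [hFeq']; exact ⟨hzQ, h⟩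
  set T : Finset ι := univ.filter (fun i => ∃ x ∈ F, lsum (A i) x < b i) with hT
  -- a point of F strictly satisfying all rows of T
  obtain ⟨xb, hxbF, hstrict⟩ : ∃ xb ∈ F, ∀ i ∈ T, lsum (A i) xb < b i := by
    rcases T.eq_empty_or_nonempty with h | hTne
    · exact ⟨x₀, hx₀, by simp [h]⟩
    · have hwit : ∀ i ∈ T, ∃ x ∈ F, lsum (A i) x < b i := fun i hi => (Finset.mem_filter.1 hi).2
      choose xw hxwF hxwlt using hwit
      have hm : (0 : ℝ) < (T.card : ℝ) := by
        exact_mod_cast Finset.card_pos.2 hTne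
      refine ⟨∑ i ∈ T.attach, ((T.card : ℝ))⁻¹ • xw i i.2, ?_, ?_⟩
      · rw [hFeq']
        refine (convex_face A b c α).sum_mem (fun _ _ => by positivity) ?_ ?_
        · rw [Finset.sum_const, Finset.card_attach, nsmul_eq_mul, mul_inv_cancel₀ hm.ne']
        · intro i _
          exact hFeq' ▸ hxwF i i.2
      · intro i hi
        rw [lsum_finsum]
        have hlt : ∑ j ∈ T.attach, ((T.card : ℝ))⁻¹ * lsum (A i) (xw j j.2)
            < ∑ _j ∈ T.attach, ((T.card : ℝ))⁻¹ * b i := by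
          refine Finset.sum_lt_sum (fun j _ => ?_) ⟨⟨i, hi⟩, Finset.mem_attach _ _, ?_⟩
          · exact mul_le_mul_of_nonneg_left (hFsub (hxwF j j.2) i) (by positivity)
          · exact mul_lt_mul_of_pos_left (hxwlt i hi) (by positivity)
        calc ∑ j ∈ T.attach, ((T.card : ℝ))⁻¹ * lsum (A i) (xw j j.2)
            < ∑ _j ∈ T.attach, ((T.card : ℝ))⁻¹ * b i := hlt
          _ = b i := by
              rw [Finset.sum_const, Finset.card_attach, nsmul_eq_mul, ← mul_assoc,
                mul_inv_cancel₀ hm.ne', one_mul]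
  have hxbHP : xb ∈ HP A b := hFsub hxbF
  have hxbα : lsum c xb = α := (hFeq' ▸ hxbF).2
  have htight : ∀ i ∉ T, lsum (A i) xb = b i ∧ lsum (A i) z = b i := by
    intro i hi
    rcases key i with hk | hk
    · exact ⟨hk xb hxbHP, hk z hzQ⟩
    · exact absurd (Finset.mem_filter.2 ⟨Finset.mem_univ i, hk⟩) hi
  -- choose a small positive step
  have hepsex : ∃ eps : ℝ, 0 < eps ∧ ∀ i ∈ T,
      eps ≤ (b i - lsum (A i) xb) / (max (lsum (A i) xb - lsum (A i) z) 0 + 1) := by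
    rcases T.eq_empty_or_nonempty with h | hTne
    · exact ⟨1, one_pos, by simp [h]⟩
    · refine ⟨T.inf' hTne (fun i => (b i - lsum (A i) xb) /
        (max (lsum (A i) xb - lsum (A i) z) 0 + 1)), ?_, ?_⟩
      · rw [Finset.lt_inf'_iff]
        intro i hi
        have h1 : 0 < b i - lsum (A i) xb := sub_pos.2 (hstrict i hi)
        have h2 : (0:ℝ) < max (lsum (A i) xb - lsum (A i) z) 0 + 1 := by positivity
        positivity
      · intro i hi
        exact Finset.inf'_le _ hi
  obtain ⟨eps, heps0, hepsle⟩ := hepsex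
  set y : κ → ℝ := xb + eps • (xb - z) with hy
  have hyHP : y ∈ HP A b := by
    intro i
    rw [hy, lsum_ray]
    by_cases hi : i ∈ T
    · set u := lsum (A i) xb
      set v := lsum (A i) z
      have hu : u < b i := hstrict i hi
      have hMle : u - v ≤ max (u - v) 0 := le_max_left _ _
      have hM0 : (0:ℝ) ≤ max (u - v) 0 := le_max_right _ _
      have hle : eps ≤ (b i - u) / (max (u - v) 0 + 1) := hepsle i hi
      have h1 : eps * (u - v) ≤ eps * max (u - v) 0 :=
        mul_le_mul_of_nonneg_left hMle heps0.le
      have h2 : eps * max (u - v) 0 ≤ ((b i - u) / (max (u - v) 0 + 1)) * max (u - v) 0 :=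
        mul_le_mul_of_nonneg_right hle hM0
      have h3 : ((b i - u) / (max (u - v) 0 + 1)) * max (u - v) 0 < b i - u := by
        rw [div_mul_eq_mul_div, div_lt_iff₀ (by positivity)]
        have := mul_lt_mul_of_pos_left (lt_add_one (max (u - v) 0)) (sub_pos.2 hu)
        linarith
      linarith
    · obtain ⟨h1, h2⟩ := htight i hi
      rw [h1, h2]
      simp
  have hyc : α < lsum c y := by
    rw [hy, lsum_ray, hxbα]
    nlinarith
  exact absurd (hbound y hyHP) (not_le.2 hyc)

/-- The number of facets of an H-polytope is at most the number of rows that are not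
always tight. -/
lemma polySize_HP_le (A : ι → κ → ℝ) (b : ι → ℝ) :
    polySize (HP A b) ≤ {i | tface A b i ≠ HP A b}.ncard := by
  classical
  have hsub : {F | IsFacet (HP A b) F} ⊆
      (fun i => tface A b i) '' {i | tface A b i ≠ HP A b} := by
    intro F hF
    obtain ⟨i, hi1, hi2⟩ := facet_eq_tface hF
    exact ⟨i, hi1, hi2.symm⟩
  calc polySize (HP A b) ≤ ((fun i => tface A b i) '' {i | tface A b i ≠ HP A b}).ncard :=
        Set.ncard_le_ncard hsub ((Set.toFinite _).image _)
    _ ≤ {i | tface A b i ≠ HP A b}.ncard := Set.ncard_image_le (Set.toFinite _)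

lemma polySize_HP_le_card (A : ι → κ → ℝ) (b : ι → ℝ) :
    polySize (HP A b) ≤ Fintype.card ι := by
  refine (polySize_HP_le A b).trans ?_
  calc {i | tface A b i ≠ HP A b}.ncard ≤ (Set.univ : Set ι).ncard :=
        Set.ncard_le_ncard (Set.subset_univ _) (Set.toFinite _)
    _ = Fintype.card ι := by rw [Set.ncard_univ, Nat.card_eq_fintype_card]

section Transport

variable {κ' : Type*} [Fintype κ']

/-- Reindexing map on coordinates. -/
def rmap (e : κ' ≃ κ) (f : κ → ℝ) : κ' → ℝ := f ∘ e

lemma rmap_inj (e : κ' ≃ κ) : Function.Injective (rmap e) := by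
  intro f g h
  funext j
  have := congrFun h (e.symm j)
  simpa [rmap] using this

lemma rmap_rmap (e : κ' ≃ κ) (f : κ → ℝ) : rmap e.symm (rmap e f) = f := by
  funext j; simp [rmap]

lemma rmap_image_image (e : κ' ≃ κ) (S : Set (κ → ℝ)) :
    rmap e.symm '' (rmap e '' S) = S := by
  rw [← Set.image_comp]
  convert Set.image_id S
  ext f
  simp [rmap_rmap]

lemma lsum_rmap (e : κ' ≃ κ) (c : κ → ℝ) (f : κ → ℝ) :
    lsum (rmap e c) (rmap e f) = lsum c f := by
  unfold lsum rmap
  exact Equiv.sum_comp e (fun j => c j * f j)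

lemma exposed_rimage {e : κ' ≃ κ} {Q F : Set (κ → ℝ)} (h : IsExposedFace Q F) :
    IsExposedFace (rmap e '' Q) (rmap e '' F) := by
  obtain ⟨hsub, c, α, hbound, hFeq⟩ := h
  have hFeq' : F = {y ∈ Q | lsum c y = α} := hFeq
  refine ⟨Set.image_mono hsub, rmap e c, α, ?_, ?_⟩
  · rintro y ⟨f, hf, rfl⟩
    show lsum (rmap e c) (rmap e f) ≤ α
    rw [lsum_rmap]
    exact hbound f hf
  · ext y
    constructor
    · rintro ⟨f, hf, rfl⟩
      have hf' := hFeq' ▸ hf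
      exact ⟨⟨f, hf'.1, rfl⟩, by show lsum (rmap e c) (rmap e f) = α; rw [lsum_rmap]; exact hf'.2⟩
    · rintro ⟨⟨f, hf, rfl⟩, hα⟩
      refine ⟨f, ?_, rfl⟩
      rw [hFeq']
      refine ⟨hf, ?_⟩
      have : lsum (rmap e c) (rmap e f) = α := hα
      rwa [lsum_rmap] at this

lemma facet_rimage {e : κ' ≃ κ} {Q F : Set (κ → ℝ)} (h : IsFacet Q F) :
    IsFacet (rmap e '' Q) (rmap e '' F) := by
  obtain ⟨hexp, hne, hprop, hmax⟩ := h
  refine ⟨exposed_rimage hexp, hne.image _, ?_, ?_⟩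
  · intro hFQ
    exact hprop ((rmap_image_image e F) ▸ (rmap_image_image e Q) ▸ congrArg (rmap e.symm '' ·) hFQ)
  · intro F' hF' hF'ne hF'Q hFF'
    have hback : rmap e '' (rmap e.symm '' F') = F' := by
      have h := rmap_image_image e.symm F'
      rwa [Equiv.symm_symm] at h
    have h1 : IsExposedFace (rmap e.symm '' (rmap e '' Q)) (rmap e.symm '' F') := exposed_rimage hF'
    rw [rmap_image_image] at h1
    have h2 : (rmap e.symm '' F').Nonempty := hF'ne.image _
    have h3 : rmap e.symm '' F' ≠ Q := fun hc => hF'Q (by rw [← hback, hc])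
    have h4 : F ⊆ rmap e.symm '' F' := by
      have := Set.image_mono (f := rmap e.symm) hFF'
      rwa [rmap_image_image] at this
    have := hmax _ h1 h2 h3 h4
    rw [← hback, this]

lemma polySize_rimage (e : κ' ≃ κ) (Q : Set (κ → ℝ)) :
    polySize (rmap e '' Q) = polySize Q := by
  have hset : {F' | IsFacet (rmap e '' Q) F'} = (rmap e '' ·) '' {F | IsFacet Q F} := by
    ext F'
    constructor
    · intro hF'
      refine ⟨rmap e.symm '' F', ?_, ?_⟩
      · have := facet_rimage (e := e.symm) hF'
        rwa [rmap_image_image] at this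
      · have h := rmap_image_image e.symm F'
        rwa [Equiv.symm_symm] at h
    · rintro ⟨F, hF, rfl⟩
      exact facet_rimage hF
  rw [polySize, hset, Set.ncard_image_of_injective _ (Set.image_injective.2 (rmap_inj e))]
  rfl

/-- `rmap` as a linear map. -/
def rmapL (e : κ' ≃ κ) : (κ → ℝ) →ₗ[ℝ] (κ' → ℝ) := LinearMap.funLeft ℝ ℝ e

lemma rmapL_apply (e : κ' ≃ κ) (f : κ → ℝ) : rmapL e f = rmap e f := rfl

end Transport

/-- The main interface: the extension complexity is at most the number of facets of any
polytope (over any finite coordinate type) projecting onto `P`. -/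
lemma xc_le_polySize {ιP : Type*} [Fintype ιP] {P : Set (ιP → ℝ)} {Q : Set (κ → ℝ)}
    (hQ : IsPolytope Q) (π : (κ → ℝ) →ₗ[ℝ] (ιP → ℝ)) (hπ : π '' Q = P) :
    xc P ≤ polySize Q := by
  classical
  set k := Fintype.card κ
  set e : κ ≃ Fin k := Fintype.equivFin κ
  set Q' : Set (Fin k → ℝ) := rmap e.symm '' Q with hQ'
  have hpoly : IsPolytope Q' := by
    obtain ⟨Fs, hFs, hQeq⟩ := hQ
    refine ⟨rmap e.symm '' Fs, hFs.image _, ?_⟩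
    rw [hQ', hQeq]
    exact (rmapL e.symm).image_convexHull Fs
  have hQQ : (⇑(rmapL e)) '' Q' = Q := by
    show rmap e '' (rmap e.symm '' Q) = Q
    have h := rmap_image_image e.symm Q
    rwa [Equiv.symm_symm] at h
  have hproj : (π.comp (rmapL e)) '' Q' = P := by
    rw [LinearMap.coe_comp, Set.image_comp, hQQ, hπ]
  have hsize : polySize Q' = polySize Q := polySize_rimage e.symm Q
  rw [← hsize]
  exact Nat.sInf_le ⟨k, Q', ⟨hpoly, π.comp (rmapL e), hproj⟩, rfl⟩

lemma sum_mem_convexHull {α : Type*} (t : Finset α) (w : α → ℝ) (p : α → κ → ℝ)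
    (SS : Set (κ → ℝ)) (hw : ∀ i ∈ t, 0 ≤ w i) (h1 : ∑ i ∈ t, w i = 1)
    (hp : ∀ i ∈ t, p i ∈ convexHull ℝ SS) :
    ∑ i ∈ t, w i • p i ∈ convexHull ℝ SS :=
  (convex_convexHull ℝ SS).sum_mem hw h1 hp

/-- A `[0,1]`-vector supported on `D` is a convex combination of indicator vectors of
subsets of `D`. -/
lemma cube_mem_convexHull (D : Set κ) (v : κ → ℝ) (h0 : ∀ i, 0 ≤ v i) (h1 : ∀ i, v i ≤ 1)
    (hsupp : ∀ i, v i ≠ 0 → i ∈ D) :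
    v ∈ convexHull ℝ {x : κ → ℝ | ∃ S : Set κ, S ⊆ D ∧ x = S.indicator 1} := by
  classical
  set t : κ → Set ℝ := fun i => if i ∈ D then ({0, 1} : Set ℝ) else {0} with ht
  have hset : Set.univ.pi t = {x : κ → ℝ | ∃ S : Set κ, S ⊆ D ∧ x = S.indicator 1} := by
    ext x
    constructor
    · intro hx
      refine ⟨{i | x i = 1}, ?_, ?_⟩
      · intro i hi
        by_contra hiD
        have := hx i (Set.mem_univ i)
        rw [ht] at this
        simp only [hiD, if_neg, if_false] at this
        rw [Set.mem_setOf_eq] at hi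
        rw [this] at hi
        norm_num at hi
      · funext i
        have := hx i (Set.mem_univ i)
        by_cases hx1 : x i = 1
        · rw [Set.indicator_of_mem (by exact hx1) , hx1]; rfl
        · have hx0 : x i = 0 := by
            rw [ht] at this
            by_cases hiD : i ∈ D
            · simp only [hiD, if_true] at this
              rcases this with h | h
              · exact h
              · exact absurd h hx1
            · simpa [hiD] using this
          rw [Set.indicator_of_notMem (by exact hx1), hx0]
    · rintro ⟨S, hSD, rfl⟩
      intro i _
      rw [ht]
      by_cases hiS : i ∈ S
      · have : i ∈ D := hSD hiS
        simp [this, Set.indicator_of_mem hiS]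
      · by_cases hiD : i ∈ D
        · simp [hiD, Set.indicator_of_notMem hiS]
        · simp [hiD, Set.indicator_of_notMem hiS]
  have hv : v ∈ Set.univ.pi fun i => convexHull ℝ (t i) := by
    intro i _
    rw [ht]
    by_cases hiD : i ∈ D
    · simp only [hiD, if_true]
      rw [convexHull_pair, segment_eq_Icc zero_le_one]
      exact ⟨h0 i, h1 i⟩
    · simp only [hiD, if_false]
      rw [convexHull_singleton]
      have : v i = 0 := by
        by_contra h
        exact hiD (hsupp i h)
      exact this
  rw [← hset, convexHull_pi Set.univ t]
  exact hv

section Graph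

attribute [local instance] Classical.propDecidable

variable {V W : Type*} [Fintype V] {G : SimpleGraph V} {H : SimpleGraph W}

/-- The set of (indices of) edges containing a vertex `w`. -/
def star (φ : G ≃g lineGraph H) (w : W) : Finset V :=
  univ.filter (fun v => w ∈ ((φ v : H.edgeSet) : Sym2 W))

/-- Degree of `w` in `H`, counted through the edge indexing. -/
def deg (φ : G ≃g lineGraph H) (w : W) : ℕ := (star φ w).card

/-- The centers: vertices of degree at least 2, together with one endpoint of each
isolated edge. -/
def CF (φ : G ≃g lineGraph H) (aF bF : V → W) : Finset W :=
  ((univ.image aF ∪ univ.image bF).filter fun w => 2 ≤ deg φ w) ∪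
    (univ.filter fun v => deg φ (aF v) ≤ 1 ∧ deg φ (bF v) ≤ 1).image aF

variable {φ : G ≃g lineGraph H} {aF bF : V → W} {sSet : Set W}

section Basics

variable (hphi : ∀ v, ((φ v : H.edgeSet) : Sym2 W) = s(aF v, bF v))
  (haS : ∀ v, aF v ∈ sSet) (hbS : ∀ v, bF v ∉ sSet)

include hphi in
lemma mem_edge_iff {w : W} {v : V} : w ∈ ((φ v : H.edgeSet) : Sym2 W) ↔ w = aF v ∨ w = bF v := by
  rw [hphi v, Sym2.mem_iff]

include haS hbS in
lemma aF_ne_bF (v : V) : aF v ≠ bF v := fun h => hbS v (h ▸ haS v)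

lemma phi_inj : Function.Injective (fun v => ((φ v : H.edgeSet) : Sym2 W)) := by
  intro u v h
  exact φ.toEquiv.injective (Subtype.coe_injective h)

include hphi haS hbS in
lemma edge_ext {u v : V} (ha : aF u = aF v) (hb : bF u = bF v) : u = v := by
  apply phi_inj (φ := φ)
  show ((φ u : H.edgeSet) : Sym2 W) = ((φ v : H.edgeSet) : Sym2 W)
  rw [hphi u, hphi v, ha, hb]

include hphi in
lemma aF_mem_edge (v : V) : aF v ∈ ((φ v : H.edgeSet) : Sym2 W) := by
  rw [hphi v]; exact Sym2.mem_mk_left _ _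

include hphi in
lemma bF_mem_edge (v : V) : bF v ∈ ((φ v : H.edgeSet) : Sym2 W) := by
  rw [hphi v]; exact Sym2.mem_mk_right _ _

/-- Adjacency in `G` through the line graph. -/
lemma adj_iff (u v : V) :
    G.Adj u v ↔ u ≠ v ∧ ∃ w, w ∈ ((φ u : H.edgeSet) : Sym2 W) ∧
      w ∈ ((φ v : H.edgeSet) : Sym2 W) := by
  rw [← φ.map_adj_iff]
  show (lineGraph H).Adj (φ u) (φ v) ↔ _
  unfold lineGraph
  rw [SimpleGraph.fromRel_adj]
  constructor
  · rintro ⟨hne, h | h⟩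
    · exact ⟨fun h' => hne (by rw [h']), h⟩
    · exact ⟨fun h' => hne (by rw [h']), h.imp fun w hw => ⟨hw.2, hw.1⟩⟩
  · rintro ⟨hne, h⟩
    exact ⟨fun h' => hne (φ.toEquiv.injective h'), Or.inl h⟩

include hphi in
lemma deg_pos_of_mem {w : W} {v : V} (h : w ∈ ((φ v : H.edgeSet) : Sym2 W)) :
    1 ≤ deg φ w :=
  Finset.card_pos.2 ⟨v, Finset.mem_filter.2 ⟨mem_univ v, h⟩⟩

include hphi in
lemma star_eq_singleton {w : W} {v : V} (h : w ∈ ((φ v : H.edgeSet) : Sym2 W))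
    (hdeg : deg φ w ≤ 1) : star φ w = {v} := by
  have hv : v ∈ star φ w := Finset.mem_filter.2 ⟨mem_univ v, h⟩
  have := Finset.card_le_one.1 hdeg
  apply Finset.eq_singleton_iff_unique_mem.2
  exact ⟨hv, fun u hu => this u hu v hv⟩

include hphi in
lemma mem_CF_of_two_le {w : W} {v : V} (h : w ∈ ((φ v : H.edgeSet) : Sym2 W))
    (h2 : 2 ≤ deg φ w) : w ∈ CF φ aF bF := by
  apply Finset.mem_union_left
  refine Finset.mem_filter.2 ⟨?_, h2⟩
  rcases (mem_edge_iff hphi).1 h with h' | h'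
  · exact Finset.mem_union_left _ (h' ▸ Finset.mem_image_of_mem _ (mem_univ v))
  · exact Finset.mem_union_right _ (h' ▸ Finset.mem_image_of_mem _ (mem_univ v))

include hphi in
/-- Every edge has an endpoint among the centers. -/
lemma exists_center (v : V) : ∃ w ∈ CF φ aF bF, w ∈ ((φ v : H.edgeSet) : Sym2 W) := by
  by_cases h1 : 2 ≤ deg φ (aF v)
  · exact ⟨aF v, mem_CF_of_two_le hphi (aF_mem_edge hphi v) h1, aF_mem_edge hphi v⟩
  by_cases h2 : 2 ≤ deg φ (bF v)
  · exact ⟨bF v, mem_CF_of_two_le hphi (bF_mem_edge hphi v) h2, bF_mem_edge hphi v⟩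
  refine ⟨aF v, Finset.mem_union_right _ ?_, aF_mem_edge hphi v⟩
  exact Finset.mem_image_of_mem _ (Finset.mem_filter.2 ⟨mem_univ v,
    Nat.lt_succ_iff.1 (not_le.1 h1), Nat.lt_succ_iff.1 (not_le.1 h2)⟩)

end Basics

section Cover

variable (hphi : ∀ v, ((φ v : H.edgeSet) : Sym2 W) = s(aF v, bF v))
  (hadj : ∀ v, H.Adj (aF v) (bF v))
  (haS : ∀ v, aF v ∈ sSet) (hbS : ∀ v, bF v ∉ sSet)
  (hs : ∀ ⦃u v⦄, H.Adj u v → (u ∈ sSet ↔ v ∉ sSet))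

include hphi hadj in
lemma adj_of_two_mem {x y : W} {v : V} (hx : x ∈ ((φ v : H.edgeSet) : Sym2 W))
    (hy : y ∈ ((φ v : H.edgeSet) : Sym2 W)) (hxy : x ≠ y) : H.Adj x y := by
  rcases (mem_edge_iff hphi).1 hx with h | h <;> rcases (mem_edge_iff hphi).1 hy with h' | h' <;>
    subst h <;> subst h'
  · exact absurd rfl hxy
  · exact hadj v
  · exact (hadj v).symm
  · exact absurd rfl hxy

include hphi hadj haS hbS hs in
lemma cover (hV : Nonempty V) (S : Set V)
    (hp : ∀ u ∈ S, ∀ v ∈ S, u ≠ v → ∃ w, w ∈ ((φ u : H.edgeSet) : Sym2 W) ∧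
      w ∈ ((φ v : H.edgeSet) : Sym2 W)) :
    ∃ w ∈ CF φ aF bF, ∀ v ∈ S, w ∈ ((φ v : H.edgeSet) : Sym2 W) := by
  by_cases hS : ∃ u₀, u₀ ∈ S
  · obtain ⟨u₀, hu₀⟩ := hS
    have hcommon : (∀ v ∈ S, aF u₀ ∈ ((φ v : H.edgeSet) : Sym2 W)) ∨
        (∀ v ∈ S, bF u₀ ∈ ((φ v : H.edgeSet) : Sym2 W)) := by
      by_contra hc
      push_neg at hc
      obtain ⟨⟨f, hfS, hfa⟩, ⟨g, hgS, hgb⟩⟩ := hc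
      have hfu : f ≠ u₀ := fun h => hfa (h ▸ aF_mem_edge hphi u₀)
      have hgu : g ≠ u₀ := fun h => hgb (h ▸ bF_mem_edge hphi u₀)
      obtain ⟨w₁, hw₁u, hw₁f⟩ := hp u₀ hu₀ f hfS (fun h => hfu h.symm)
      have hw₁b : w₁ = bF u₀ := by
        rcases (mem_edge_iff hphi).1 hw₁u with h | h
        · exact absurd (h ▸ hw₁f) hfa
        · exact h
      obtain ⟨w₂, hw₂u, hw₂g⟩ := hp u₀ hu₀ g hgS (fun h => hgu h.symm)
      have hw₂a : w₂ = aF u₀ := by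
        rcases (mem_edge_iff hphi).1 hw₂u with h | h
        · exact h
        · exact absurd (h ▸ hw₂g) hgb
      have hfg : f ≠ g := fun h => hgb (h ▸ (hw₁b ▸ hw₁f))
      obtain ⟨c, hcf, hcg⟩ := hp f hfS g hgS hfg
      have hca : c ≠ aF u₀ := fun h => hfa (h ▸ hcf)
      have hcb : c ≠ bF u₀ := fun h => hgb (h ▸ hcg)
      have hAdj1 : H.Adj (bF u₀) c := adj_of_two_mem hphi hadj (hw₁b ▸ hw₁f) hcf (fun h => hcb h.symm)
      have hAdj2 : H.Adj (aF u₀) c := adj_of_two_mem hphi hadj (hw₂a ▸ hw₂g) hcg (fun h => hca h.symm)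
      have h1 := hs (hadj u₀)
      have h2 := hs hAdj1
      have h3 := hs hAdj2
      tauto
    have main : ∀ w₀, (∀ v ∈ S, w₀ ∈ ((φ v : H.edgeSet) : Sym2 W)) →
        w₀ ∈ ((φ u₀ : H.edgeSet) : Sym2 W) →
        ∃ w ∈ CF φ aF bF, ∀ v ∈ S, w ∈ ((φ v : H.edgeSet) : Sym2 W) := by
      intro w₀ hw₀ hw₀u
      by_cases hdeg : 2 ≤ deg φ w₀
      · exact ⟨w₀, mem_CF_of_two_le hphi hw₀u hdeg, hw₀⟩
      · have hsing := star_eq_singleton hphi hw₀u (by omega)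
        obtain ⟨w, hwCF, hwm⟩ := exists_center hphi u₀
        refine ⟨w, hwCF, fun v hv => ?_⟩
        have : v ∈ star φ w₀ := Finset.mem_filter.2 ⟨mem_univ v, hw₀ v hv⟩
        rw [hsing, Finset.mem_singleton] at this
        rw [this]
        exact hwm
    rcases hcommon with hcom | hcom
    · exact main _ hcom (aF_mem_edge hphi u₀)
    · exact main _ hcom (bF_mem_edge hphi u₀)
  · obtain ⟨v⟩ := hV
    obtain ⟨w, h1, _⟩ := exists_center hphi v
    exact ⟨w, h1, fun v' hv' => absurd ⟨v', hv'⟩ hS⟩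

include hphi in
lemma CF_card_le : (CF φ aF bF).card ≤ Fintype.card V := by
  classical
  set D2 : Finset W := (univ.image aF ∪ univ.image bF).filter (fun w => 2 ≤ deg φ w) with hD2def
  set IsoV : Finset V := univ.filter (fun v => deg φ (aF v) ≤ 1 ∧ deg φ (bF v) ≤ 1) with hIsodef
  set IncV : Finset V := univ.filter (fun v : V => 2 ≤ deg φ (aF v) ∨ 2 ≤ deg φ (bF v)) with hIncdef
  have h1 : (CF φ aF bF).card ≤ D2.card + (IsoV.image aF).card := Finset.card_union_le _ _
  have h2 : (IsoV.image aF).card ≤ IsoV.card := Finset.card_image_le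
  have hdisj : Disjoint IsoV IncV := by
    rw [Finset.disjoint_left]
    intro v hv hv'
    have hA := (Finset.mem_filter.1 hv).2
    have hB := (Finset.mem_filter.1 hv').2
    omega
  have hD2card : D2.card ≤ IncV.card := by
    set P : Finset (W × V) := (D2 ×ˢ (univ : Finset V)).filter
      (fun p => p.1 ∈ ((φ p.2 : H.edgeSet) : Sym2 W)) with hPdef
    have hfst : ∀ p ∈ P, p.1 ∈ D2 := fun p hp =>
      (Finset.mem_product.1 (Finset.mem_filter.1 hp).1).1
    have e1 : P.card = ∑ w ∈ D2, (P.filter (fun p => p.1 = w)).card :=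
      Finset.card_eq_sum_card_fiberwise hfst
    have hsnd : ∀ p ∈ P, p.2 ∈ IncV := by
      intro p hp
      have hm := (Finset.mem_filter.1 hp).2
      have hd : 2 ≤ deg φ p.1 := (Finset.mem_filter.1 (hfst p hp)).2
      rcases (mem_edge_iff hphi).1 hm with h | h
      · exact Finset.mem_filter.2 ⟨mem_univ _, Or.inl (h ▸ hd)⟩
      · exact Finset.mem_filter.2 ⟨mem_univ _, Or.inr (h ▸ hd)⟩
    have e2 : P.card = ∑ v ∈ IncV, (P.filter (fun p => p.2 = v)).card :=
      Finset.card_eq_sum_card_fiberwise hsnd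
    have lower : ∀ w ∈ D2, 2 ≤ (P.filter (fun p => p.1 = w)).card := by
      intro w hw
      have hd : 2 ≤ deg φ w := (Finset.mem_filter.1 hw).2
      refine le_trans hd ?_
      refine Finset.card_le_card_of_injOn (fun v => (w, v)) ?_ ?_
      · intro v hv
        refine Finset.mem_filter.2 ⟨Finset.mem_filter.2 ⟨Finset.mem_product.2
          ⟨hw, mem_univ v⟩, (Finset.mem_filter.1 hv).2⟩, rfl⟩
      · intro a _ b _ h
        exact congrArg Prod.snd h
    have upper : ∀ v ∈ IncV, (P.filter (fun p => p.2 = v)).card ≤ 2 := by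
      intro v _
      have hsub : P.filter (fun p => p.2 = v) ⊆ {(aF v, v), (bF v, v)} := by
        intro p hp
        obtain ⟨hpP, hpv⟩ := Finset.mem_filter.1 hp
        have hm := (Finset.mem_filter.1 hpP).2
        rw [hpv] at hm
        rcases (mem_edge_iff hphi).1 hm with h | h
        · exact Finset.mem_insert.2 (Or.inl (Prod.ext h hpv))
        · exact Finset.mem_insert.2 (Or.inr (Finset.mem_singleton.2 (Prod.ext h hpv)))
      refine le_trans (Finset.card_le_card hsub) ?_
      refine le_trans (Finset.card_insert_le _ _) ?_
      simp
    have hlow : 2 * D2.card ≤ P.card := by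
      rw [e1]
      calc 2 * D2.card = ∑ _w ∈ D2, 2 := by rw [Finset.sum_const, smul_eq_mul, mul_comm]
        _ ≤ ∑ w ∈ D2, (P.filter (fun p => p.1 = w)).card := Finset.sum_le_sum lower
    have hup : P.card ≤ 2 * IncV.card := by
      rw [e2]
      calc ∑ v ∈ IncV, (P.filter (fun p => p.2 = v)).card ≤ ∑ _v ∈ IncV, 2 :=
            Finset.sum_le_sum upper
        _ = 2 * IncV.card := by rw [Finset.sum_const, smul_eq_mul, mul_comm]
    omega
  have hfinal : IncV.card + IsoV.card ≤ Fintype.card V := by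
    rw [← Finset.card_union_of_disjoint hdisj.symm]
    exact le_trans (Finset.card_le_card (Finset.subset_univ _)) (le_of_eq Finset.card_univ)
  omega

end Cover

section SystemLemmas

variable {κ : Type*} [Fintype κ]

lemma lsum_neg_single (v : κ) (x : κ → ℝ) (d : (v' : κ) → Decidable (v' = v)) :
    lsum (fun v' => @ite ℝ (v' = v) (d v') (-1 : ℝ) 0) x = -x v := by
  classical
  unfold lsum
  have h : ∀ j, (@ite ℝ (j = v) (d j) (-1:ℝ) 0) * x j = if j = v then -x j else 0 := by
    intro j
    rcases d j with hd | hd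
    · rw [if_neg hd, if_neg hd, zero_mul]
    · rw [if_pos hd, if_pos hd, neg_one_mul]
  rw [Finset.sum_congr rfl fun j _ => h j,
    Finset.sum_eq_single v (fun b _ hb => if_neg hb) (fun hc => absurd (mem_univ v) hc),
    if_pos rfl]

lemma lsum_pos_single (v : κ) (x : κ → ℝ) (d : (v' : κ) → Decidable (v' = v)) :
    lsum (fun v' => @ite ℝ (v' = v) (d v') (1 : ℝ) 0) x = x v := by
  classical
  unfold lsum
  have h : ∀ j, (@ite ℝ (j = v) (d j) (1:ℝ) 0) * x j = if j = v then x j else 0 := by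
    intro j
    rcases d j with hd | hd
    · rw [if_neg hd, if_neg hd, zero_mul]
    · rw [if_pos hd, if_pos hd, one_mul]
  rw [Finset.sum_congr rfl fun j _ => h j,
    Finset.sum_eq_single v (fun b _ hb => if_neg hb) (fun hc => absurd (mem_univ v) hc),
    if_pos rfl]

lemma lsum_ind (p : κ → Prop) [DecidablePred p] (x : κ → ℝ) :
    lsum (fun v => if p v then (1:ℝ) else 0) x = ∑ v ∈ univ.filter p, x v := by
  unfold lsum
  rw [Finset.sum_filter]
  refine Finset.sum_congr rfl fun j _ => ?_
  by_cases h : p j <;> simp [h]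

end SystemLemmas

section Part1

attribute [local instance] Classical.propDecidable

variable {V W : Type*} [Fintype V] {G : SimpleGraph V} {H : SimpleGraph W}

/-- Rows of the constraint system for the matching polytope. -/
def A1 (φ : G ≃g lineGraph H) (aF bF : V → W) : (V ⊕ ↥(CF φ aF bF)) → V → ℝ :=
  Sum.elim (fun v v' => if v' = v then -1 else 0)
    (fun w v' => if (w : W) ∈ ((φ v' : H.edgeSet) : Sym2 W) then 1 else 0)

def b1 (φ : G ≃g lineGraph H) (aF bF : V → W) : (V ⊕ ↥(CF φ aF bF)) → ℝ :=
  Sum.elim (fun _ => 0) (fun _ => 1)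

variable {φ : G ≃g lineGraph H} {aF bF : V → W} {sSet : Set W}

lemma mem_HP1 (x : V → ℝ) :
    x ∈ HP (A1 φ aF bF) (b1 φ aF bF) ↔
      (∀ v, 0 ≤ x v) ∧ ∀ w : ↥(CF φ aF bF), ∑ v ∈ star φ (w : W), x v ≤ 1 := by
  constructor
  · intro h
    constructor
    · intro v
      have := h (Sum.inl v)
      rw [show A1 φ aF bF (Sum.inl v) = fun v' => if v' = v then -1 else 0 from rfl,
        lsum_neg_single] at this
      simpa [b1] using this
    · intro w
      have := h (Sum.inr w)
      rwa [show A1 φ aF bF (Sum.inr w)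
          = fun v' => if (w : W) ∈ ((φ v' : H.edgeSet) : Sym2 W) then (1:ℝ) else 0 from rfl,
        lsum_ind] at this
  · rintro ⟨h0, h1⟩ i
    rcases i with v | w
    · rw [show A1 φ aF bF (Sum.inl v) = fun v' => if v' = v then -1 else 0 from rfl,
        lsum_neg_single]
      simpa [b1] using h0 v
    · rw [show A1 φ aF bF (Sum.inr w)
          = fun v' => if (w : W) ∈ ((φ v' : H.edgeSet) : Sym2 W) then (1:ℝ) else 0 from rfl,
        lsum_ind]
      exact h1 w

section P1

variable (hphi : ∀ v, ((φ v : H.edgeSet) : Sym2 W) = s(aF v, bF v))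
  (haS : ∀ v, aF v ∈ sSet) (hbS : ∀ v, bF v ∉ sSet)

include hphi in
lemma Sw_le_one {x : V → ℝ} (hx0 : ∀ v, 0 ≤ x v)
    (hxw : ∀ w : ↥(CF φ aF bF), ∑ v ∈ star φ (w : W), x v ≤ 1) (w : W)
    (hw : ∃ v, w ∈ ((φ v : H.edgeSet) : Sym2 W)) : ∑ v ∈ star φ w, x v ≤ 1 := by
  by_cases hC : w ∈ CF φ aF bF
  · exact hxw ⟨w, hC⟩
  · obtain ⟨v, hv⟩ := hw
    have hd1 : deg φ w ≤ 1 := by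
      by_contra h
      exact hC (mem_CF_of_two_le hphi hv (by omega))
    rw [star_eq_singleton hphi hv hd1, Finset.sum_singleton]
    obtain ⟨w', hw'CF, hw'm⟩ := exists_center hphi v
    calc x v ≤ ∑ v' ∈ star φ w', x v' :=
          Finset.single_le_sum (fun i _ => hx0 i)
            (Finset.mem_filter.2 ⟨mem_univ v, hw'm⟩)
      _ ≤ 1 := hxw ⟨w', hw'CF⟩

include hphi haS hbS in
lemma HP1_subset_stab {x : V → ℝ} (hx : x ∈ HP (A1 φ aF bF) (b1 φ aF bF)) :
    x ∈ convexHull ℝ {y : V → ℝ |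
      ∃ S : Set V, (∀ u ∈ S, ∀ v ∈ S, ¬ G.Adj u v) ∧ y = S.indicator 1} := by
  classical
  obtain ⟨hx0, hxw⟩ := (mem_HP1 x).1 hx
  set sA : Finset W := univ.image aF with hsA
  set sB : Finset W := univ.image bF with hsB
  have haFm : ∀ v, aF v ∈ sA := fun v => Finset.mem_image_of_mem _ (mem_univ v)
  have hbFm : ∀ v, bF v ∈ sB := fun v => Finset.mem_image_of_mem _ (mem_univ v)
  set Sv : W → ℝ := fun w => ∑ v ∈ star φ w, x v with hSv
  set xm : W → W → ℝ := fun a b => ∑ v ∈ univ.filter (fun v => aF v = a ∧ bF v = b), x v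
    with hxm
  have hxm0 : ∀ a b, 0 ≤ xm a b := fun a b => Finset.sum_nonneg fun v _ => hx0 v
  have hSv1 : ∀ w : W, (∃ v, w ∈ ((φ v : H.edgeSet) : Sym2 W)) → Sv w ≤ 1 :=
    fun w hw => Sw_le_one hphi hx0 hxw w hw
  have hSvA : ∀ a ∈ sA, Sv a ≤ 1 := by
    intro a ha
    obtain ⟨v, _, rfl⟩ := Finset.mem_image.1 ha
    exact hSv1 _ ⟨v, aF_mem_edge hphi v⟩
  have hSvB : ∀ b ∈ sB, Sv b ≤ 1 := by
    intro b hb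
    obtain ⟨v, _, rfl⟩ := Finset.mem_image.1 hb
    exact hSv1 _ ⟨v, bF_mem_edge hphi v⟩
  -- star of an `sA` vertex consists of the edges with that `a`-endpoint
  have factA : ∀ a ∈ sA, star φ a = univ.filter (fun v => aF v = a) := by
    intro a ha
    obtain ⟨v₀, _, rfl⟩ := Finset.mem_image.1 ha
    ext v
    simp only [star, Finset.mem_filter, mem_univ, true_and]
    constructor
    · intro h
      rcases (mem_edge_iff hphi).1 h with h' | h'
      · exact h'.symm
      · exact absurd (h' ▸ haS v₀) (hbS v)
    · intro h
      exact h ▸ aF_mem_edge hphi v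
  have factB : ∀ b ∈ sB, star φ b = univ.filter (fun v => bF v = b) := by
    intro b hb
    obtain ⟨v₀, _, rfl⟩ := Finset.mem_image.1 hb
    ext v
    simp only [star, Finset.mem_filter, mem_univ, true_and]
    constructor
    · intro h
      rcases (mem_edge_iff hphi).1 h with h' | h'
      · exact absurd (h'.symm ▸ hbS v₀) (fun hc => hc (haS v))
      · exact h'.symm
    · intro h
      exact h ▸ bF_mem_edge hphi v
  have factRowA : ∀ a ∈ sA, ∑ b ∈ sB, xm a b = Sv a := by
    intro a ha
    show ∑ b ∈ sB, xm a b = ∑ v ∈ star φ a, x v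
    rw [factA a ha]
    rw [← Finset.sum_fiberwise_of_maps_to (g := bF) (t := sB)
      (fun v _ => hbFm v) (fun v => x v)]
    refine Finset.sum_congr rfl fun b _ => ?_
    show ∑ v ∈ univ.filter (fun v => aF v = a ∧ bF v = b), x v = _
    rw [Finset.filter_filter]
  have factColB : ∀ b ∈ sB, ∑ a ∈ sA, xm a b = Sv b := by
    intro b hb
    show ∑ a ∈ sA, xm a b = ∑ v ∈ star φ b, x v
    rw [factB b hb]
    rw [← Finset.sum_fiberwise_of_maps_to (g := aF) (t := sA)
      (fun v _ => haFm v) (fun v => x v)]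
    refine Finset.sum_congr rfl fun a _ => ?_
    show ∑ v ∈ univ.filter (fun v => aF v = a ∧ bF v = b), x v = _
    rw [Finset.filter_filter]
    refine Finset.sum_congr ?_ fun _ _ => rfl
    ext v
    simp only [Finset.mem_filter, mem_univ, true_and]
    tauto
  -- the doubly stochastic matrix
  set M : Matrix (↥sA ⊕ ↥sB) (↥sA ⊕ ↥sB) ℝ := fun i j =>
    match i, j with
    | Sum.inl a, Sum.inl a' => if a = a' then 1 - Sv (a' : W) else 0
    | Sum.inl a, Sum.inr b => xm (a : W) (b : W)
    | Sum.inr b, Sum.inl a => xm (a : W) (b : W)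
    | Sum.inr b, Sum.inr b' => if b = b' then 1 - Sv (b' : W) else 0
    with hM
  have hrowA : ∀ a : ↥sA, ∑ j, M (Sum.inl a) j = 1 := by
    intro a
    rw [Fintype.sum_sum_type]
    have d1 : ∑ a' : ↥sA, M (Sum.inl a) (Sum.inl a') = 1 - Sv (a : W) := by
      show ∑ a' : ↥sA, (if a = a' then 1 - Sv (a' : W) else 0) = _
      rw [Finset.sum_ite_eq univ a (fun a' => 1 - Sv (a' : W)), if_pos (mem_univ a)]
    have d2 : ∑ b : ↥sB, M (Sum.inl a) (Sum.inr b) = Sv (a : W) := by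
      show ∑ b : ↥sB, xm (a : W) (b : W) = _
      rw [Finset.sum_coe_sort sB (fun b => xm (a : W) b)]
      exact factRowA _ a.2
    rw [d1, d2]; ring
  have hrowB : ∀ b : ↥sB, ∑ j, M (Sum.inr b) j = 1 := by
    intro b
    rw [Fintype.sum_sum_type]
    have d1 : ∑ a : ↥sA, M (Sum.inr b) (Sum.inl a) = Sv (b : W) := by
      show ∑ a : ↥sA, xm (a : W) (b : W) = _
      rw [Finset.sum_coe_sort sA (fun a => xm a (b : W))]
      exact factColB _ b.2
    have d2 : ∑ b' : ↥sB, M (Sum.inr b) (Sum.inr b') = 1 - Sv (b : W) := by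
      show ∑ b' : ↥sB, (if b = b' then 1 - Sv (b' : W) else 0) = _
      rw [Finset.sum_ite_eq univ b (fun b' => 1 - Sv (b' : W)), if_pos (mem_univ b)]
    rw [d1, d2]; ring
  have hcolA : ∀ a : ↥sA, ∑ i, M i (Sum.inl a) = 1 := by
    intro a
    rw [Fintype.sum_sum_type]
    have d1 : ∑ a' : ↥sA, M (Sum.inl a') (Sum.inl a) = 1 - Sv (a : W) := by
      show ∑ a' : ↥sA, (if a' = a then 1 - Sv (a : W) else 0) = _
      rw [Finset.sum_ite_eq' univ a (fun _ => 1 - Sv (a : W)), if_pos (mem_univ a)]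
    have d2 : ∑ b : ↥sB, M (Sum.inr b) (Sum.inl a) = Sv (a : W) := by
      show ∑ b : ↥sB, xm (a : W) (b : W) = _
      rw [Finset.sum_coe_sort sB (fun b => xm (a : W) b)]
      exact factRowA _ a.2
    rw [d1, d2]; ring
  have hcolB : ∀ b : ↥sB, ∑ i, M i (Sum.inr b) = 1 := by
    intro b
    rw [Fintype.sum_sum_type]
    have d1 : ∑ a : ↥sA, M (Sum.inl a) (Sum.inr b) = Sv (b : W) := by
      show ∑ a : ↥sA, xm (a : W) (b : W) = _
      rw [Finset.sum_coe_sort sA (fun a => xm a (b : W))]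
      exact factColB _ b.2
    have d2 : ∑ b' : ↥sB, M (Sum.inr b') (Sum.inr b) = 1 - Sv (b : W) := by
      show ∑ b' : ↥sB, (if b' = b then 1 - Sv (b : W) else 0) = _
      rw [Finset.sum_ite_eq' univ b (fun _ => 1 - Sv (b : W)), if_pos (mem_univ b)]
    rw [d1, d2]; ring
  have hDS : M ∈ doublyStochastic ℝ (↥sA ⊕ ↥sB) := by
    rw [mem_doublyStochastic_iff_sum]
    refine ⟨?_, ?_, ?_⟩
    · rintro (a | b) (a' | b')
      · show 0 ≤ if a = a' then 1 - Sv (a' : W) else 0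
        split
        · linarith [hSvA (a' : W) a'.2]
        · exact le_refl 0
      · exact hxm0 _ _
      · exact hxm0 _ _
      · show 0 ≤ if b = b' then 1 - Sv (b' : W) else 0
        split
        · linarith [hSvB (b' : W) b'.2]
        · exact le_refl 0
    · rintro (a | b)
      · exact hrowA a
      · exact hrowB b
    · rintro (a | b)
      · exact hcolA a
      · exact hcolB b
  obtain ⟨wt, hwt0, hwt1, hwtM⟩ := exists_eq_sum_perm_of_mem_doublyStochastic hDS
  -- the matchings extracted from the permutations
  set pnt : Equiv.Perm (↥sA ⊕ ↥sB) → (V → ℝ) := fun σ v =>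
    if σ (Sum.inl ⟨aF v, haFm v⟩) = Sum.inr ⟨bF v, hbFm v⟩ then 1 else 0 with hpnt
  have hgen : ∀ σ : Equiv.Perm (↥sA ⊕ ↥sB), pnt σ ∈ {y : V → ℝ |
      ∃ S : Set V, (∀ u ∈ S, ∀ v ∈ S, ¬ G.Adj u v) ∧ y = S.indicator 1} := by
    intro σ
    refine ⟨{v | σ (Sum.inl ⟨aF v, haFm v⟩) = Sum.inr ⟨bF v, hbFm v⟩}, ?_, ?_⟩
    · intro u hu v hv hAdj
      have hu' : σ (Sum.inl ⟨aF u, haFm u⟩) = Sum.inr ⟨bF u, hbFm u⟩ := hu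
      have hv' : σ (Sum.inl ⟨aF v, haFm v⟩) = Sum.inr ⟨bF v, hbFm v⟩ := hv
      obtain ⟨hne, wsh, hwu, hwv⟩ := (adj_iff u v).1 hAdj
      rcases (mem_edge_iff hphi).1 hwu with h | h <;>
        rcases (mem_edge_iff hphi).1 hwv with h' | h'
      · have hac : aF u = aF v := h.symm.trans h'
        have hinl : (Sum.inl ⟨aF u, haFm u⟩ : ↥sA ⊕ ↥sB) = Sum.inl ⟨aF v, haFm v⟩ := by
          rw [Sum.inl.injEq]
          exact Subtype.ext hac
        have hinr : (Sum.inr ⟨bF u, hbFm u⟩ : ↥sA ⊕ ↥sB) = Sum.inr ⟨bF v, hbFm v⟩ := by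
          rw [← hu', ← hv', hinl]
        have hbc : bF u = bF v := Subtype.ext_iff.1 (Sum.inr_injective hinr)
        exact hne (edge_ext hphi haS hbS hac hbc)
      · have hthis : aF u = bF v := h.symm.trans h'
        exact hbS v (hthis ▸ haS u)
      · have hthis : bF u = aF v := h.symm.trans h'
        exact hbS u (hthis.symm ▸ haS v)
      · have hbc : bF u = bF v := h.symm.trans h'
        have hinr : (Sum.inr ⟨bF u, hbFm u⟩ : ↥sA ⊕ ↥sB) = Sum.inr ⟨bF v, hbFm v⟩ := by
          rw [Sum.inr.injEq]
          exact Subtype.ext hbc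
        have hinl : (Sum.inl ⟨aF u, haFm u⟩ : ↥sA ⊕ ↥sB) = Sum.inl ⟨aF v, haFm v⟩ :=
          σ.injective (by rw [hu', hv', hinr])
        have hac : aF u = aF v := Subtype.ext_iff.1 (Sum.inl_injective hinl)
        exact hne (edge_ext hphi haS hbS hac hbc)
    · funext v
      rw [Set.indicator_apply]
      show (if σ (Sum.inl ⟨aF v, haFm v⟩) = Sum.inr ⟨bF v, hbFm v⟩ then (1:ℝ) else 0) = _
      by_cases h : σ (Sum.inl ⟨aF v, haFm v⟩) = Sum.inr ⟨bF v, hbFm v⟩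
      · rw [if_pos h, if_pos (show v ∈ {v | σ (Sum.inl ⟨aF v, haFm v⟩)
          = Sum.inr ⟨bF v, hbFm v⟩} from h)]
        rfl
      · rw [if_neg h, if_neg (show v ∉ {v | σ (Sum.inl ⟨aF v, haFm v⟩)
          = Sum.inr ⟨bF v, hbFm v⟩} from h)]
  have hMentry : ∀ v : V,
      M (Sum.inl ⟨aF v, haFm v⟩) (Sum.inr ⟨bF v, hbFm v⟩) = x v := by
    intro v
    show ∑ v' ∈ univ.filter (fun v' => aF v' = aF v ∧ bF v' = bF v), x v' = x v
    have hfil : univ.filter (fun v' => aF v' = aF v ∧ bF v' = bF v) = {v} := by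
      ext u
      simp only [Finset.mem_filter, mem_univ, true_and, Finset.mem_singleton]
      constructor
      · rintro ⟨h1, h2⟩
        exact edge_ext hphi haS hbS h1 h2
      · rintro rfl
        exact ⟨rfl, rfl⟩
    rw [hfil, Finset.sum_singleton]
  have hperm : ∀ (σ : Equiv.Perm (↥sA ⊕ ↥sB)) (v : V),
      σ.permMatrix ℝ (Sum.inl ⟨aF v, haFm v⟩) (Sum.inr ⟨bF v, hbFm v⟩) = pnt σ v := by
    intro σ v
    show _ = if σ (Sum.inl ⟨aF v, haFm v⟩) = Sum.inr ⟨bF v, hbFm v⟩ then (1:ℝ) else 0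
    simp only [Equiv.Perm.permMatrix, PEquiv.toMatrix_apply, Equiv.toPEquiv_apply,
      Option.mem_def, Option.some.injEq]
    all_goals first
    | rfl
    | exact if_congr eq_comm rfl rfl
    | exact if_congr Iff.rfl rfl rfl
  have hxsum : x = ∑ σ : Equiv.Perm (↥sA ⊕ ↥sB), wt σ • pnt σ := by
    funext v
    have hentry : (∑ σ : Equiv.Perm (↥sA ⊕ ↥sB), wt σ • σ.permMatrix ℝ)
        (Sum.inl ⟨aF v, haFm v⟩) (Sum.inr ⟨bF v, hbFm v⟩) = x v := by
      rw [hwtM]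
      exact hMentry v
    rw [Matrix.sum_apply] at hentry
    rw [Finset.sum_apply]
    rw [← hentry]
    refine Finset.sum_congr rfl fun σ _ => ?_
    show wt σ * σ.permMatrix ℝ (Sum.inl ⟨aF v, haFm v⟩) (Sum.inr ⟨bF v, hbFm v⟩)
      = wt σ * pnt σ v
    rw [hperm σ v]
  rw [hxsum]
  exact sum_mem_convexHull univ wt pnt _ (fun σ _ => hwt0 σ) hwt1
    (fun σ _ => subset_convexHull ℝ _ (hgen σ))

end P1

lemma stab_subset_HP1 : stab G ⊆ HP (A1 φ aF bF) (b1 φ aF bF) := by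
  apply convexHull_min ?_ (convex_HP _ _)
  rintro x ⟨S, hS, rfl⟩
  rw [mem_HP1]
  constructor
  · intro v
    exact Set.indicator_nonneg (fun _ _ => by norm_num) v
  · intro w
    have hrw : ∀ v ∈ star φ (w : W), S.indicator (1 : V → ℝ) v = if v ∈ S then 1 else 0 :=
      fun v _ => Set.indicator_apply S 1 v
    rw [Finset.sum_congr rfl hrw, Finset.sum_boole, Nat.cast_le_one]
    apply Finset.card_le_one.2
    intro a ha b hb
    by_contra hab
    obtain ⟨haSt, haS'⟩ := Finset.mem_filter.1 ha
    obtain ⟨hbSt, hbS'⟩ := Finset.mem_filter.1 hb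
    have hwa : (w : W) ∈ ((φ a : H.edgeSet) : Sym2 W) := (Finset.mem_filter.1 haSt).2
    have hwb : (w : W) ∈ ((φ b : H.edgeSet) : Sym2 W) := (Finset.mem_filter.1 hbSt).2
    exact hS a haS' b hbS' ((adj_iff a b).2 ⟨hab, (w : W), hwa, hwb⟩)

section P1b

variable (hphi : ∀ v, ((φ v : H.edgeSet) : Sym2 W) = s(aF v, bF v))
  (haS : ∀ v, aF v ∈ sSet) (hbS : ∀ v, bF v ∉ sSet)

include hphi haS hbS in
lemma stab_eq_HP1 : stab G = HP (A1 φ aF bF) (b1 φ aF bF) := by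
  refine subset_antisymm stab_subset_HP1 ?_
  intro x hx
  exact HP1_subset_stab hphi haS hbS hx

include hphi haS hbS in
lemma part1_bound : xc (stab G) ≤ 2 * Fintype.card V := by
  have hfin : {x : V → ℝ | ∃ S : Set V,
      (∀ u ∈ S, ∀ v ∈ S, ¬ G.Adj u v) ∧ x = S.indicator 1}.Finite := by
    apply Set.Finite.subset (Set.finite_range (fun S : Set V => (S.indicator 1 : V → ℝ)))
    rintro x ⟨S, _, rfl⟩
    exact ⟨S, rfl⟩
  have hpoly : IsPolytope (stab G) := ⟨_, hfin, rfl⟩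
  refine le_trans (xc_le_polySize hpoly LinearMap.id ?_) ?_
  · rw [LinearMap.id_coe, Set.image_id]
  · rw [show stab G = HP (A1 φ aF bF) (b1 φ aF bF) from stab_eq_HP1 hphi haS hbS]
    refine le_trans (polySize_HP_le_card _ _) ?_
    rw [Fintype.card_sum, Fintype.card_coe]
    have := CF_card_le (φ := φ) (aF := aF) (bF := bF) hphi
    omega

end P1b

end Part1

section Part2

attribute [local instance] Classical.propDecidable

variable {V W : Type*} [Fintype V] {G : SimpleGraph V} {H : SimpleGraph W}

/-- Rows of the constraint system for the extension of the complement stable set polytope. -/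
def A2 (φ : G ≃g lineGraph H) (aF bF : V → W) :
    ((V ⊕ ↥(CF φ aF bF)) ⊕ (V ⊕ Bool)) → (V ⊕ ↥(CF φ aF bF)) → ℝ :=
  Sum.elim (fun j₀ j => if j = j₀ then -1 else 0)
    (Sum.elim
      (fun v => Sum.elim (fun v' => if v' = v then 1 else 0)
        (fun w => if (w : W) ∈ ((φ v : H.edgeSet) : Sym2 W) then -1 else 0))
      (fun t => match t with
        | true => Sum.elim 0 1
        | false => Sum.elim 0 (-1)))

def b2 (φ : G ≃g lineGraph H) (aF bF : V → W) : ((V ⊕ ↥(CF φ aF bF)) ⊕ (V ⊕ Bool)) → ℝ :=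
  Sum.elim (fun _ => 0) (Sum.elim (fun _ => 0)
    (fun t => match t with | true => 1 | false => -1))

/-- The vertex set of the extension. -/
def Vert (φ : G ≃g lineGraph H) (aF bF : V → W) : Set ((V ⊕ ↥(CF φ aF bF)) → ℝ) :=
  {p | ∃ (w : ↥(CF φ aF bF)) (S : Set V),
    (∀ v ∈ S, (w : W) ∈ ((φ v : H.edgeSet) : Sym2 W)) ∧
    p = Sum.elim (S.indicator 1) (fun w' => if w' = w then 1 else 0)}

variable {φ : G ≃g lineGraph H} {aF bF : V → W} {sSet : Set W}

lemma lsum_edge_row (v : V) (p : (V ⊕ ↥(CF φ aF bF)) → ℝ) :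
    lsum (Sum.elim (fun v' => if v' = v then (1:ℝ) else 0)
      (fun w : ↥(CF φ aF bF) => if (w : W) ∈ ((φ v : H.edgeSet) : Sym2 W) then -1 else 0)) p
    = p (Sum.inl v) - ∑ w : ↥(CF φ aF bF),
        (if (w : W) ∈ ((φ v : H.edgeSet) : Sym2 W) then p (Sum.inr w) else 0) := by
  unfold lsum
  rw [Fintype.sum_sum_type]
  have h1 : ∑ v' : V, (Sum.elim (fun v' => if v' = v then (1:ℝ) else 0)
      (fun w : ↥(CF φ aF bF) => if (w : W) ∈ ((φ v : H.edgeSet) : Sym2 W) then -1 else 0)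
      (Sum.inl v')) * p (Sum.inl v') = p (Sum.inl v) := by
    have hterm : ∀ v' : V, (Sum.elim (fun v' => if v' = v then (1:ℝ) else 0)
        (fun w : ↥(CF φ aF bF) => if (w : W) ∈ ((φ v : H.edgeSet) : Sym2 W) then -1 else 0)
        (Sum.inl v')) * p (Sum.inl v')
        = if v' = v then p (Sum.inl v') else 0 := by
      intro v'
      show (if v' = v then (1:ℝ) else 0) * p (Sum.inl v') = _
      split <;> simp
    rw [Finset.sum_congr rfl fun j _ => hterm j,
      Finset.sum_ite_eq' univ v (fun v' => p (Sum.inl v')), if_pos (mem_univ v)]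
  have h2 : ∑ w : ↥(CF φ aF bF), (Sum.elim (fun v' => if v' = v then (1:ℝ) else 0)
      (fun w : ↥(CF φ aF bF) => if (w : W) ∈ ((φ v : H.edgeSet) : Sym2 W) then -1 else 0)
      (Sum.inr w)) * p (Sum.inr w)
      = -∑ w : ↥(CF φ aF bF),
        (if (w : W) ∈ ((φ v : H.edgeSet) : Sym2 W) then p (Sum.inr w) else 0) := by
    rw [← Finset.sum_neg_distrib]
    refine Finset.sum_congr rfl fun w _ => ?_
    show (if (w : W) ∈ ((φ v : H.edgeSet) : Sym2 W) then (-1:ℝ) else 0) * p (Sum.inr w) = _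
    split <;> simp
  rw [h1, h2]
  ring

lemma lsum_lam_row (p : (V ⊕ ↥(CF φ aF bF)) → ℝ) :
    lsum (Sum.elim (0 : V → ℝ) (1 : ↥(CF φ aF bF) → ℝ)) p
      = ∑ w : ↥(CF φ aF bF), p (Sum.inr w) := by
  unfold lsum
  rw [Fintype.sum_sum_type]
  simp

lemma lsum_lam_row_neg (p : (V ⊕ ↥(CF φ aF bF)) → ℝ) :
    lsum (Sum.elim (0 : V → ℝ) (-1 : ↥(CF φ aF bF) → ℝ)) p
      = -∑ w : ↥(CF φ aF bF), p (Sum.inr w) := by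
  unfold lsum
  rw [Fintype.sum_sum_type]
  simp

lemma mem_HP2 (p : (V ⊕ ↥(CF φ aF bF)) → ℝ) :
    p ∈ HP (A2 φ aF bF) (b2 φ aF bF) ↔
      (∀ j, 0 ≤ p j) ∧
      (∀ v : V, p (Sum.inl v) ≤ ∑ w : ↥(CF φ aF bF),
        (if (w : W) ∈ ((φ v : H.edgeSet) : Sym2 W) then p (Sum.inr w) else 0)) ∧
      (∑ w : ↥(CF φ aF bF), p (Sum.inr w)) = 1 := by
  constructor
  · intro h
    refine ⟨?_, ?_, ?_⟩
    · intro j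
      have := h (Sum.inl j)
      rw [show A2 φ aF bF (Sum.inl j) = fun j' => if j' = j then -1 else 0 from rfl,
        lsum_neg_single] at this
      simpa [b2] using this
    · intro v
      have := h (Sum.inr (Sum.inl v))
      rw [show A2 φ aF bF (Sum.inr (Sum.inl v)) = Sum.elim (fun v' => if v' = v then (1:ℝ) else 0)
          (fun w : ↥(CF φ aF bF) =>
            if (w : W) ∈ ((φ v : H.edgeSet) : Sym2 W) then -1 else 0) from rfl,
        lsum_edge_row] at this
      have hb : b2 φ aF bF (Sum.inr (Sum.inl v)) = 0 := rfl
      rw [hb] at this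
      linarith
    · have h1 := h (Sum.inr (Sum.inr true))
      have h2 := h (Sum.inr (Sum.inr false))
      rw [show A2 φ aF bF (Sum.inr (Sum.inr true))
          = Sum.elim (0 : V → ℝ) (1 : ↥(CF φ aF bF) → ℝ) from rfl, lsum_lam_row] at h1
      rw [show A2 φ aF bF (Sum.inr (Sum.inr false))
          = Sum.elim (0 : V → ℝ) (-1 : ↥(CF φ aF bF) → ℝ) from rfl, lsum_lam_row_neg] at h2
      have hb1 : b2 φ aF bF (Sum.inr (Sum.inr true)) = 1 := rfl
      have hb2 : b2 φ aF bF (Sum.inr (Sum.inr false)) = -1 := rfl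
      rw [hb1] at h1
      rw [hb2] at h2
      linarith
  · rintro ⟨h0, h1, h2⟩ i
    rcases i with j | (v | t)
    · rw [show A2 φ aF bF (Sum.inl j) = fun j' => if j' = j then -1 else 0 from rfl,
        lsum_neg_single]
      have hb : b2 φ aF bF (Sum.inl j) = 0 := rfl
      rw [hb]
      linarith [h0 j]
    · rw [show A2 φ aF bF (Sum.inr (Sum.inl v)) = Sum.elim (fun v' => if v' = v then (1:ℝ) else 0)
          (fun w : ↥(CF φ aF bF) =>
            if (w : W) ∈ ((φ v : H.edgeSet) : Sym2 W) then -1 else 0) from rfl,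
        lsum_edge_row]
      have hb : b2 φ aF bF (Sum.inr (Sum.inl v)) = 0 := rfl
      rw [hb]
      linarith [h1 v]
    · cases t
      · rw [show A2 φ aF bF (Sum.inr (Sum.inr false))
            = Sum.elim (0 : V → ℝ) (-1 : ↥(CF φ aF bF) → ℝ) from rfl, lsum_lam_row_neg]
        have hb : b2 φ aF bF (Sum.inr (Sum.inr false)) = -1 := rfl
        rw [hb]
        linarith
      · rw [show A2 φ aF bF (Sum.inr (Sum.inr true))
            = Sum.elim (0 : V → ℝ) (1 : ↥(CF φ aF bF) → ℝ) from rfl, lsum_lam_row]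
        have hb : b2 φ aF bF (Sum.inr (Sum.inr true)) = 1 := rfl
        rw [hb]
        linarith

lemma sum_ite_mem (w : ↥(CF φ aF bF)) (v : V) :
    (∑ w' : ↥(CF φ aF bF), (if (w' : W) ∈ ((φ v : H.edgeSet) : Sym2 W)
      then (if w' = w then (1:ℝ) else 0) else 0))
    = if (w : W) ∈ ((φ v : H.edgeSet) : Sym2 W) then (1:ℝ) else 0 := by
  have h : ∀ w' : ↥(CF φ aF bF), (if (w' : W) ∈ ((φ v : H.edgeSet) : Sym2 W)
      then (if w' = w then (1:ℝ) else 0) else 0)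
      = if w' = w then (if (w : W) ∈ ((φ v : H.edgeSet) : Sym2 W) then (1:ℝ) else 0) else 0 := by
    intro w'
    by_cases hw : w' = w
    · subst hw
      by_cases hm : (w' : W) ∈ ((φ v : H.edgeSet) : Sym2 W) <;> simp [hm]
    · by_cases hm : (w' : W) ∈ ((φ v : H.edgeSet) : Sym2 W) <;> simp [hm, hw]
  rw [Finset.sum_congr rfl fun w' _ => h w',
    Finset.sum_eq_single w (fun b _ hb => if_neg hb) (fun hc => absurd (mem_univ w) hc),
    if_pos rfl]

lemma Vert_subset_HP2 : Vert φ aF bF ⊆ HP (A2 φ aF bF) (b2 φ aF bF) := by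
  rintro p ⟨w, S, hSstar, rfl⟩
  rw [mem_HP2]
  refine ⟨?_, ?_, ?_⟩
  · rintro (v | w')
    · exact Set.indicator_nonneg (fun _ _ => by norm_num) v
    · show (0:ℝ) ≤ if w' = w then 1 else 0
      split <;> norm_num
  · intro v
    show S.indicator 1 v ≤ _
    rw [show (∑ w' : ↥(CF φ aF bF), (if (w' : W) ∈ ((φ v : H.edgeSet) : Sym2 W)
        then (Sum.elim (S.indicator (1 : V → ℝ)) (fun w' => if w' = w then (1:ℝ) else 0))
          (Sum.inr w') else 0))
      = ∑ w' : ↥(CF φ aF bF), (if (w' : W) ∈ ((φ v : H.edgeSet) : Sym2 W)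
        then (if w' = w then (1:ℝ) else 0) else 0) from rfl, sum_ite_mem]
    rw [Set.indicator_apply]
    by_cases hv : v ∈ S
    · rw [if_pos hv, if_pos (hSstar v hv)]
      exact le_refl _
    · rw [if_neg hv]
      split <;> norm_num
  · show (∑ w' : ↥(CF φ aF bF), (if w' = w then (1:ℝ) else 0)) = 1
    rw [Finset.sum_eq_single w (fun b _ hb => if_neg hb) (fun hc => absurd (mem_univ w) hc),
      if_pos rfl]

/-- Lift a point of the cube over the star of `w` into the hull of `Vert`. -/
lemma lift_point (w : ↥(CF φ aF bF)) (u : V → ℝ)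
    (hu : u ∈ convexHull ℝ {y : V → ℝ | ∃ S : Set V,
      (S ⊆ {v | (w : W) ∈ ((φ v : H.edgeSet) : Sym2 W)}) ∧ y = S.indicator 1}) :
    Sum.elim u (fun w' => if w' = w then (1:ℝ) else 0)
      ∈ convexHull ℝ (Vert φ aF bF) := by
  rw [_root_.convexHull_eq] at hu
  obtain ⟨ι', t, wgt, z, hw0, hw1, hz, hcm⟩ := hu
  rw [Finset.centerMass_eq_of_sum_1 _ _ hw1] at hcm
  have hrep : Sum.elim u (fun w' => if w' = w then (1:ℝ) else 0)
      = ∑ i ∈ t, wgt i • Sum.elim (z i) (fun w' => if w' = w then (1:ℝ) else 0) := by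
    funext j
    rw [Finset.sum_apply]
    rcases j with v | w'
    · show u v = ∑ i ∈ t, (wgt i • Sum.elim (z i) _) (Sum.inl v)
      have : ∀ i, (wgt i • Sum.elim (z i)
          (fun w' => if w' = w then (1:ℝ) else 0)) (Sum.inl v) = wgt i * z i v := fun i => rfl
      rw [Finset.sum_congr rfl fun i _ => this i]
      have := congrFun hcm v
      rw [← this, Finset.sum_apply]
      rfl
    · show (if w' = w then (1:ℝ) else 0) = _
      have : ∀ i, (wgt i • Sum.elim (z i)
          (fun w'' => if w'' = w then (1:ℝ) else 0)) (Sum.inr w')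
          = wgt i * (if w' = w then (1:ℝ) else 0) := fun i => rfl
      rw [Finset.sum_congr rfl fun i _ => this i, ← Finset.sum_mul, hw1, one_mul]
  rw [hrep]
  refine sum_mem_convexHull t wgt _ _ hw0 hw1 (fun i hi => subset_convexHull ℝ _ ?_)
  obtain ⟨S, hSsub, hzi⟩ := hz i hi
  exact ⟨w, S, fun v hv => hSsub hv, by rw [hzi]⟩

lemma HP2_eq_convexHull : HP (A2 φ aF bF) (b2 φ aF bF) = convexHull ℝ (Vert φ aF bF) := by
  refine subset_antisymm ?_ (convexHull_min Vert_subset_HP2 (convex_HP _ _))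
  intro p hp
  obtain ⟨h0, h1, h2⟩ := (mem_HP2 p).1 hp
  set lam : ↥(CF φ aF bF) → ℝ := fun w => p (Sum.inr w) with hlam
  set den : V → ℝ := fun v => ∑ w : ↥(CF φ aF bF),
    (if (w : W) ∈ ((φ v : H.edgeSet) : Sym2 W) then lam w else 0) with hden
  have hden0 : ∀ v, 0 ≤ den v := by
    intro v
    refine Finset.sum_nonneg fun w _ => ?_
    split
    · exact h0 _
    · exact le_refl 0
  -- the split of `p` into the pieces supported on stars
  set uu : ↥(CF φ aF bF) → V → ℝ := fun w v =>
    if ((w : W) ∈ ((φ v : H.edgeSet) : Sym2 W) ∧ 0 < den v ∧ lam w ≠ 0)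
    then p (Sum.inl v) / den v else 0 with huu
  have huu01 : ∀ w v, 0 ≤ uu w v ∧ uu w v ≤ 1 := by
    intro w v
    simp only [huu]
    split
    · rename_i hcond
      constructor
      · exact div_nonneg (h0 _) (hden0 v)
      · rw [div_le_one hcond.2.1]
        exact h1 v
    · exact ⟨le_refl 0, zero_le_one⟩
  have huusup : ∀ w v, uu w v ≠ 0 → (w : W) ∈ ((φ v : H.edgeSet) : Sym2 W) := by
    intro w v h
    simp only [huu] at h
    by_contra hc
    exact h (if_neg (fun hcond => hc hcond.1))
  have hsplit : ∀ v, ∑ w : ↥(CF φ aF bF), lam w * uu w v = p (Sum.inl v) := by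
    intro v
    by_cases hdv : 0 < den v
    · have hterm : ∀ w : ↥(CF φ aF bF), lam w * uu w v
          = (if (w : W) ∈ ((φ v : H.edgeSet) : Sym2 W) then lam w else 0)
            * (p (Sum.inl v) / den v) := by
        intro w
        simp only [huu]
        by_cases hm : (w : W) ∈ ((φ v : H.edgeSet) : Sym2 W)
        · by_cases hl : lam w = 0
          · rw [if_pos hm, hl]
            split <;> simp
          · rw [if_pos (⟨hm, hdv, hl⟩ :
              (w : W) ∈ ((φ v : H.edgeSet) : Sym2 W) ∧ 0 < den v ∧ lam w ≠ 0), if_pos hm]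
        · rw [if_neg (fun hcond => hm hcond.1), if_neg hm, mul_zero, zero_mul]
      rw [Finset.sum_congr rfl fun w _ => hterm w, ← Finset.sum_mul]
      rw [show (∑ w : ↥(CF φ aF bF),
        (if (w : W) ∈ ((φ v : H.edgeSet) : Sym2 W) then lam w else 0)) = den v from rfl]
      field_simp
    · have hdz : den v = 0 := le_antisymm (not_lt.1 hdv) (hden0 v)
      have hx0 : p (Sum.inl v) = 0 := by
        have := h1 v
        rw [show (∑ w : ↥(CF φ aF bF), (if (w : W) ∈ ((φ v : H.edgeSet) : Sym2 W)
          then p (Sum.inr w) else 0)) = den v from rfl, hdz] at this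
        exact le_antisymm this (h0 _)
      have : ∀ w : ↥(CF φ aF bF), lam w * uu w v = 0 := by
        intro w
        simp only [huu]
        rw [if_neg (fun hcond : _ ∧ 0 < den v ∧ _ => hdv hcond.2.1), mul_zero]
      rw [Finset.sum_congr rfl fun w _ => this w, Finset.sum_const, smul_zero, hx0]
  have hq : ∀ w : ↥(CF φ aF bF), Sum.elim (uu w) (fun w' => if w' = w then (1:ℝ) else 0)
      ∈ convexHull ℝ (Vert φ aF bF) := by
    intro w
    refine lift_point w (uu w) ?_
    exact cube_mem_convexHull _ (uu w) (fun v => (huu01 w v).1) (fun v => (huu01 w v).2)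
      (fun v h => huusup w v h)
  have hrep : p = ∑ w : ↥(CF φ aF bF),
      lam w • Sum.elim (uu w) (fun w' => if w' = w then (1:ℝ) else 0) := by
    funext j
    rw [Finset.sum_apply]
    rcases j with v | w₀
    · rw [show (∑ w : ↥(CF φ aF bF), (lam w • Sum.elim (uu w)
        (fun w' => if w' = w then (1:ℝ) else 0)) (Sum.inl v))
        = ∑ w : ↥(CF φ aF bF), lam w * uu w v from rfl, hsplit v]
    · rw [show (∑ w : ↥(CF φ aF bF), (lam w • Sum.elim (uu w)
        (fun w' => if w' = w then (1:ℝ) else 0)) (Sum.inr w₀))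
        = ∑ w : ↥(CF φ aF bF), lam w * (if w₀ = w then (1:ℝ) else 0) from rfl]
      have hterm : ∀ w : ↥(CF φ aF bF), lam w * (if w₀ = w then (1:ℝ) else 0)
          = if w₀ = w then lam w else 0 := by
        intro w
        split <;> simp
      rw [Finset.sum_congr rfl fun w _ => hterm w,
        Finset.sum_eq_single w₀ (fun b _ hb => if_neg (fun hc => hb hc.symm))
          (fun hc => absurd (mem_univ w₀) hc), if_pos rfl]
  rw [hrep]
  exact sum_mem_convexHull univ lam _ _ (fun w _ => h0 _) h2 (fun w _ => hq w)

section P2b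

variable (hphi : ∀ v, ((φ v : H.edgeSet) : Sym2 W) = s(aF v, bF v))
  (hadj : ∀ v, H.Adj (aF v) (bF v))
  (haS : ∀ v, aF v ∈ sSet) (hbS : ∀ v, bF v ∉ sSet)
  (hs : ∀ ⦃u v⦄, H.Adj u v → (u ∈ sSet ↔ v ∉ sSet))

include hphi hadj haS hbS hs in
lemma proj_Vert (hV : Nonempty V) :
    (⇑(LinearMap.funLeft ℝ ℝ (Sum.inl : V → V ⊕ ↥(CF φ aF bF)))) '' Vert φ aF bF
      = {x : V → ℝ | ∃ S : Set V, (∀ u ∈ S, ∀ v ∈ S, ¬ Gᶜ.Adj u v) ∧ x = S.indicator 1} := by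
  ext x
  constructor
  · rintro ⟨p, ⟨w, S, hstar, rfl⟩, rfl⟩
    refine ⟨S, ?_, rfl⟩
    intro u hu v hv hadj'
    obtain ⟨hne, hnadj⟩ := (SimpleGraph.compl_adj G u v).1 hadj'
    exact hnadj ((adj_iff u v).2 ⟨hne, (w : W), hstar u hu, hstar v hv⟩)
  · rintro ⟨S, hS, rfl⟩
    have hp : ∀ u ∈ S, ∀ v ∈ S, u ≠ v → ∃ w, w ∈ ((φ u : H.edgeSet) : Sym2 W) ∧
        w ∈ ((φ v : H.edgeSet) : Sym2 W) := by
      intro u hu v hv hne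
      have hGadj : G.Adj u v := by
        by_contra hn
        exact hS u hu v hv ((SimpleGraph.compl_adj G u v).2 ⟨hne, hn⟩)
      exact ((adj_iff u v).1 hGadj).2
    obtain ⟨w, hwCF, hwcov⟩ := cover hphi hadj haS hbS hs hV S hp
    exact ⟨Sum.elim (S.indicator 1) (fun w' => if w' = ⟨w, hwCF⟩ then 1 else 0),
      ⟨⟨w, hwCF⟩, S, hwcov, rfl⟩, rfl⟩

include hphi hadj haS hbS hs in
lemma part2_bound (hV : Nonempty V) : xc (stab Gᶜ) ≤ 3 * Fintype.card V := by
  have hVfin : (Vert φ aF bF).Finite := by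
    apply Set.Finite.subset (Set.finite_range (fun q : ↥(CF φ aF bF) × Set V =>
      Sum.elim (q.2.indicator 1) (fun w' => if w' = q.1 then (1:ℝ) else 0)))
    rintro p ⟨w, S, hst, rfl⟩
    exact ⟨(w, S), rfl⟩
  have hpoly : IsPolytope (HP (A2 φ aF bF) (b2 φ aF bF)) :=
    ⟨Vert φ aF bF, hVfin, HP2_eq_convexHull⟩
  have himage : (LinearMap.funLeft ℝ ℝ (Sum.inl : V → V ⊕ ↥(CF φ aF bF)))
      '' HP (A2 φ aF bF) (b2 φ aF bF) = stab Gᶜ := by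
    rw [HP2_eq_convexHull, LinearMap.image_convexHull,
      proj_Vert hphi hadj haS hbS hs hV]
    rfl
  refine le_trans (xc_le_polySize hpoly _ himage) ?_
  refine le_trans (polySize_HP_le _ _) ?_
  have htrue : tface (A2 φ aF bF) (b2 φ aF bF) (Sum.inr (Sum.inr true))
      = HP (A2 φ aF bF) (b2 φ aF bF) := by
    refine subset_antisymm (fun x hx => hx.1) fun x hx => ⟨hx, ?_⟩
    show lsum (A2 φ aF bF (Sum.inr (Sum.inr true))) x = b2 φ aF bF (Sum.inr (Sum.inr true))
    rw [show A2 φ aF bF (Sum.inr (Sum.inr true))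
        = Sum.elim (0 : V → ℝ) (1 : ↥(CF φ aF bF) → ℝ) from rfl, lsum_lam_row]
    exact ((mem_HP2 x).1 hx).2.2
  have hfalse : tface (A2 φ aF bF) (b2 φ aF bF) (Sum.inr (Sum.inr false))
      = HP (A2 φ aF bF) (b2 φ aF bF) := by
    refine subset_antisymm (fun x hx => hx.1) fun x hx => ⟨hx, ?_⟩
    show lsum (A2 φ aF bF (Sum.inr (Sum.inr false))) x = b2 φ aF bF (Sum.inr (Sum.inr false))
    rw [show A2 φ aF bF (Sum.inr (Sum.inr false))
        = Sum.elim (0 : V → ℝ) (-1 : ↥(CF φ aF bF) → ℝ) from rfl, lsum_lam_row_neg]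
    have := ((mem_HP2 x).1 hx).2.2
    show _ = (-1 : ℝ)
    rw [this]
  set r1 : (V ⊕ ↥(CF φ aF bF)) ⊕ (V ⊕ Bool) := Sum.inr (Sum.inr true) with hr1
  set r2 : (V ⊕ ↥(CF φ aF bF)) ⊕ (V ⊕ Bool) := Sum.inr (Sum.inr false) with hr2
  have hsub : {i | tface (A2 φ aF bF) (b2 φ aF bF) i ≠ HP (A2 φ aF bF) (b2 φ aF bF)}
      ⊆ (↑((((univ : Finset ((V ⊕ ↥(CF φ aF bF)) ⊕ (V ⊕ Bool))).erase r1).erase r2)) :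
        Set ((V ⊕ ↥(CF φ aF bF)) ⊕ (V ⊕ Bool))) := by
    intro i hi
    rw [Finset.coe_erase, Finset.coe_erase]
    refine ⟨⟨Finset.mem_coe.2 (mem_univ i), ?_⟩, ?_⟩
    · intro hc
      rw [Set.mem_singleton_iff] at hc
      exact hi (hc ▸ htrue)
    · intro hc
      rw [Set.mem_singleton_iff] at hc
      exact hi (hc ▸ hfalse)
  have hcard : ((((univ : Finset ((V ⊕ ↥(CF φ aF bF)) ⊕ (V ⊕ Bool))).erase r1).erase r2)).card
      = Fintype.card V + (CF φ aF bF).card + Fintype.card V := by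
    have hne : r2 ≠ r1 := by
      rw [hr1, hr2]
      intro hc
      simpa using hc
    rw [Finset.card_erase_of_mem (Finset.mem_erase.2 ⟨hne, mem_univ r2⟩),
      Finset.card_erase_of_mem (mem_univ r1), Finset.card_univ]
    rw [Fintype.card_sum, Fintype.card_sum, Fintype.card_sum, Fintype.card_coe,
      Fintype.card_bool]
    omega
  calc {i | tface (A2 φ aF bF) (b2 φ aF bF) i ≠ HP (A2 φ aF bF) (b2 φ aF bF)}.ncard
      ≤ _ := Set.ncard_le_ncard hsub (Set.toFinite _)
    _ = ((((univ : Finset ((V ⊕ ↥(CF φ aF bF)) ⊕ (V ⊕ Bool))).erase r1).erase r2)).card :=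
        Set.ncard_coe_finset _
    _ ≤ 3 * Fintype.card V := by
        rw [hcard]
        have := CF_card_le (φ := φ) (aF := aF) (bF := bF) hphi
        omega

end P2b

end Part2

end Graph

lemma stab_polytope {V : Type*} [Fintype V] (G : SimpleGraph V) : IsPolytope (stab G) := by
  refine ⟨_, ?_, rfl⟩
  apply Set.Finite.subset (Set.finite_range (fun S : Set V => (S.indicator 1 : V → ℝ)))
  rintro x ⟨S, _, rfl⟩
  exact ⟨S, rfl⟩

lemma polySize_of_subsingleton {κ : Type*} [Fintype κ] (hsub : Subsingleton (κ → ℝ))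
    (Q : Set (κ → ℝ)) : polySize Q = 0 := by
  rw [polySize]
  convert Set.ncard_empty (Set (κ → ℝ))
  ext F
  simp only [Set.mem_setOf_eq, Set.mem_empty_iff_false, iff_false]
  rintro ⟨⟨hFsub, _⟩, ⟨x₀, hx₀⟩, hne, _⟩
  apply hne
  ext y
  constructor
  · exact fun h => hFsub h
  · intro _
    exact (Subsingleton.elim x₀ y) ▸ hx₀

end XCAux

/-- if `G = (V, E)` is the line graph of a bipartite graph, then
`xc (STAB G) ≤ 2|V|` and `xc (STAB Ḡ) ≤ 3|V|` for the complement `Ḡ` of `G`. -/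
theorem xc_stab_lineGraph_bipartite {V : Type*} {W : Type*} [Fintype V]
    (G : SimpleGraph V) (H : SimpleGraph W) (hH : IsBipartite H)
    (hiso : Nonempty (G ≃g lineGraph H)) :
    xc (stab G) ≤ 2 * Fintype.card V ∧ xc (stab Gᶜ) ≤ 3 * Fintype.card V := by
  obtain ⟨φ⟩ := hiso
  obtain ⟨sSet, hs⟩ := hH
  rcases isEmpty_or_nonempty V with hVe | hV
  · have hsub : Subsingleton (V → ℝ) := ⟨fun a b => funext fun v => hVe.elim v⟩
    constructor
    · refine le_trans (XCAux.xc_le_polySize (XCAux.stab_polytope G) LinearMap.id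
        (by rw [LinearMap.id_coe, Set.image_id])) ?_
      rw [XCAux.polySize_of_subsingleton hsub]
      exact Nat.zero_le _
    · refine le_trans (XCAux.xc_le_polySize (XCAux.stab_polytope Gᶜ) LinearMap.id
        (by rw [LinearMap.id_coe, Set.image_id])) ?_
      rw [XCAux.polySize_of_subsingleton hsub]
      exact Nat.zero_le _
  · have hend : ∀ v : V, ∃ p : W × W, ((φ v : H.edgeSet) : Sym2 W) = s(p.1, p.2)
        ∧ H.Adj p.1 p.2 ∧ p.1 ∈ sSet ∧ p.2 ∉ sSet := by
      intro v
      have hkey : ∀ (e : Sym2 W), e ∈ H.edgeSet → ∃ p : W × W, e = s(p.1, p.2)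
          ∧ H.Adj p.1 p.2 ∧ p.1 ∈ sSet ∧ p.2 ∉ sSet := by
        intro e
        induction e using Sym2.ind with
        | _ u u' =>
          intro he
          rw [SimpleGraph.mem_edgeSet] at he
          by_cases hu : u ∈ sSet
          · exact ⟨(u, u'), rfl, he, hu, (hs he).1 hu⟩
          · have hu' : u' ∈ sSet := by
              have := hs he
              tauto
            exact ⟨(u', u), Sym2.eq_swap, he.symm, hu', hu⟩
      exact hkey _ (φ v).2
    choose pf hphi hadj haS hbS using hend
    exact ⟨XCAux.part1_bound hphi haS hbS,
      XCAux.part2_bound hphi hadj haS hbS hs hV⟩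
end XCAux
end

section
/- For the complete bipartite graph K_{p,q}, the extension complexity of its stable set polytope satisfies xc(STAB(K_{p,q})) ≤ 2p + 2q + 3. -/
set_option linter.unusedSectionVars false


namespace XC15
open Set

/-! ### Index helpers -/

def idxA {p : ℕ} (q : ℕ) (i : Fin p) : Fin (p+q+1) := ⟨i.1, by omega⟩
def idxB (p : ℕ) {q : ℕ} (j : Fin q) : Fin (p+q+1) := ⟨p + j.1, by omega⟩
def idxT (p q : ℕ) : Fin (p+q+1) := ⟨p + q, by omega⟩

variable {p q : ℕ}

@[simp] lemma idxA_val (i : Fin p) : (idxA q i).1 = i.1 := rfl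
@[simp] lemma idxB_val (j : Fin q) : (idxB p j).1 = p + j.1 := rfl
@[simp] lemma idxT_val : (idxT p q).1 = p + q := rfl

lemma idxA_ne_idxT (i : Fin p) : idxA q i ≠ idxT p q := by
  intro h; have := congrArg Fin.val h; simp [idxA, idxT] at this; omega

lemma idxB_ne_idxT (j : Fin q) : idxB p j ≠ idxT p q := by
  intro h; have := congrArg Fin.val h; simp [idxB, idxT] at this; omega

lemma idxA_ne_idxB (i : Fin p) (j : Fin q) : idxA q i = idxB p j → False := by
  intro h; have := congrArg Fin.val h; simp [idxA, idxB] at this; omega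

lemma idxA_inj {i i' : Fin p} (h : idxA q i = idxA q i') : i = i' := by
  have := congrArg Fin.val h; simp [idxA] at this; exact Fin.ext this

lemma idxB_inj {j j' : Fin q} (h : idxB p j = idxB p j') : j = j' := by
  have := congrArg Fin.val h; simp [idxB] at this; exact Fin.ext this

lemma idx_cases (k : Fin (p+q+1)) :
    (∃ i, k = idxA q i) ∨ (∃ j, k = idxB p j) ∨ k = idxT p q := by
  rcases lt_or_ge k.1 p with h | h
  · exact .inl ⟨⟨k.1, h⟩, Fin.ext rfl⟩
  rcases lt_or_ge k.1 (p+q) with h2 | h2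
  · exact .inr (.inl ⟨⟨k.1 - p, by omega⟩, Fin.ext (by simp [idxB]; omega)⟩)
  · exact .inr (.inr (Fin.ext (by simp [idxT]; omega)))

/-! ### Dot products -/

def dot {κ : Type*} [Fintype κ] (a z : κ → ℝ) : ℝ := ∑ k, a k * z k

variable {κ : Type*} [Fintype κ] [DecidableEq κ]

lemma dot_single (a : κ) (r : ℝ) (z : κ → ℝ) : dot (Pi.single a r) z = r * z a := by
  unfold dot
  rw [Finset.sum_eq_single a]
  · simp
  · intro b _ hb; simp [Pi.single_apply, hb]
  · simp

lemma dot_neg_left (a z : κ → ℝ) : dot (-a) z = -dot a z := by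
  simp [dot, Finset.sum_neg_distrib]

lemma dot_add_left (a b z : κ → ℝ) : dot (a + b) z = dot a z + dot b z := by
  simp [dot, add_mul, Finset.sum_add_distrib]

lemma dot_sub_left (a b z : κ → ℝ) : dot (a - b) z = dot a z - dot b z := by
  simp [dot, sub_mul, Finset.sum_sub_distrib]

lemma dot_add_right (a z w : κ → ℝ) : dot a (z + w) = dot a z + dot a w := by
  simp [dot, mul_add, Finset.sum_add_distrib]

lemma dot_sub_right (a z w : κ → ℝ) : dot a (z - w) = dot a z - dot a w := by
  simp [dot, mul_sub, Finset.sum_sub_distrib]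

lemma dot_smul_right (a z : κ → ℝ) (r : ℝ) : dot a (r • z) = r * dot a z := by
  simp only [dot, Finset.mul_sum, Pi.smul_apply, smul_eq_mul]
  exact Finset.sum_congr rfl fun i _ => by ring

lemma dot_zero_right (a : κ → ℝ) : dot a 0 = 0 := by simp [dot]



/-! ### Constraint system -/

abbrev J (p q : ℕ) := (Fin p ⊕ Fin p) ⊕ (Fin q ⊕ Fin q) ⊕ Bool

noncomputable def cvec {p q : ℕ} : J p q → (Fin (p+q+1) → ℝ)
  | .inl (.inl i) => -Pi.single (idxA q i) 1
  | .inl (.inr i) => Pi.single (idxA q i) 1 - Pi.single (idxT p q) 1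
  | .inr (.inl (.inl j)) => -Pi.single (idxB p j) 1
  | .inr (.inl (.inr j)) => Pi.single (idxB p j) 1 + Pi.single (idxT p q) 1
  | .inr (.inr false) => -Pi.single (idxT p q) 1
  | .inr (.inr true) => Pi.single (idxT p q) 1

def cb {p q : ℕ} : J p q → ℝ
  | .inl (.inl _) => 0
  | .inl (.inr _) => 0
  | .inr (.inl (.inl _)) => 0
  | .inr (.inl (.inr _)) => 1
  | .inr (.inr false) => 0
  | .inr (.inr true) => 1

def Q (p q : ℕ) : Set (Fin (p+q+1) → ℝ) := {z | ∀ j : J p q, dot (cvec j) z ≤ cb j}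

variable {p q : ℕ}

lemma dot_cvec (z : Fin (p+q+1) → ℝ) :
    (∀ i : Fin p, dot (cvec (p := p) (q := q) (.inl (.inl i))) z = -(z (idxA q i)) ∧
      dot (cvec (p := p) (q := q) (.inl (.inr i))) z = z (idxA q i) - z (idxT p q)) ∧
    (∀ j : Fin q, dot (cvec (p := p) (q := q) (.inr (.inl (.inl j)))) z = -(z (idxB p j)) ∧
      dot (cvec (p := p) (q := q) (.inr (.inl (.inr j)))) z = z (idxB p j) + z (idxT p q)) ∧
    dot (cvec (p := p) (q := q) (.inr (.inr false))) z = -(z (idxT p q)) ∧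
    dot (cvec (p := p) (q := q) (.inr (.inr true))) z = z (idxT p q) := by
  refine ⟨fun i => ⟨?_, ?_⟩, fun j => ⟨?_, ?_⟩, ?_, ?_⟩ <;>
    simp [cvec, dot_neg_left, dot_add_left, dot_sub_left, dot_single]

lemma mem_Q_iff (z : Fin (p+q+1) → ℝ) :
    z ∈ Q p q ↔ (∀ i : Fin p, 0 ≤ z (idxA q i) ∧ z (idxA q i) ≤ z (idxT p q)) ∧
      (∀ j : Fin q, 0 ≤ z (idxB p j) ∧ z (idxB p j) + z (idxT p q) ≤ 1) ∧
      0 ≤ z (idxT p q) ∧ z (idxT p q) ≤ 1 := by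
  obtain ⟨hA, hB, ht0, ht1⟩ := dot_cvec (p := p) (q := q) z
  constructor
  · intro h
    refine ⟨fun i => ⟨?_, ?_⟩, fun j => ⟨?_, ?_⟩, ?_, ?_⟩
    · have := h (.inl (.inl i)); rw [(hA i).1] at this; simpa [cb] using this
    · have := h (.inl (.inr i)); rw [(hA i).2] at this; simp [cb] at this; linarith
    · have := h (.inr (.inl (.inl j))); rw [(hB j).1] at this; simpa [cb] using this
    · have := h (.inr (.inl (.inr j))); rw [(hB j).2] at this; simpa [cb] using this
    · have := h (.inr (.inr false)); rw [ht0] at this; simpa [cb] using this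
    · have := h (.inr (.inr true)); rw [ht1] at this; simpa [cb] using this
  · rintro ⟨h1, h2, h3, h4⟩ j
    match j with
    | .inl (.inl i) => rw [(hA i).1]; simp [cb]; exact (h1 i).1
    | .inl (.inr i) => rw [(hA i).2]; simp [cb]; linarith [(h1 i).2]
    | .inr (.inl (.inl j)) => rw [(hB j).1]; simp [cb]; exact (h2 j).1
    | .inr (.inl (.inr j)) => rw [(hB j).2]; simpa [cb] using (h2 j).2
    | .inr (.inr false) => rw [ht0]; simpa [cb] using h3
    | .inr (.inr true) => rw [ht1]; simpa [cb] using h4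

lemma convex_Q : Convex ℝ (Q p q) := by
  intro x hx y hy a b ha hb hab
  intro j
  have hx' := hx j; have hy' := hy j
  have : dot (cvec j) (a • x + b • y) = a * dot (cvec j) x + b * dot (cvec j) y := by
    rw [dot_add_right, dot_smul_right, dot_smul_right]
  rw [this]
  have h1 := mul_le_mul_of_nonneg_left hx' ha
  have h2 := mul_le_mul_of_nonneg_left hy' hb
  have h3 : a * cb j + b * cb j = cb j := by rw [← add_mul, hab, one_mul]
  linarith


/-! ### Coordinate evaluation of the basis vectors -/

variable {p q : ℕ}

def eA {p : ℕ} (q : ℕ) (i : Fin p) : Fin (p+q+1) → ℝ := Pi.single (idxA q i) 1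
def eB (p : ℕ) {q : ℕ} (j : Fin q) : Fin (p+q+1) → ℝ := Pi.single (idxB p j) 1
def eT (p q : ℕ) : Fin (p+q+1) → ℝ := Pi.single (idxT p q) 1

@[simp] lemma eT_at_A (i : Fin p) : eT p q (idxA q i) = 0 := by
  rw [eT, Pi.single_eq_of_ne (idxA_ne_idxT i)]
@[simp] lemma eA_at_T (i : Fin p) : eA q i (idxT p q) = 0 := by
  rw [eA, Pi.single_eq_of_ne (Ne.symm (idxA_ne_idxT i))]
@[simp] lemma eT_at_B (j : Fin q) : eT p q (idxB p j) = 0 := by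
  rw [eT, Pi.single_eq_of_ne (idxB_ne_idxT j)]
@[simp] lemma eB_at_T (j : Fin q) : eB p j (idxT p q) = 0 := by
  rw [eB, Pi.single_eq_of_ne (Ne.symm (idxB_ne_idxT j))]
@[simp] lemma eA_at_B (i : Fin p) (j : Fin q) : eA q i (idxB p j) = 0 := by
  rw [eA, Pi.single_eq_of_ne (fun h => idxA_ne_idxB i j h.symm)]
@[simp] lemma eB_at_A (i : Fin p) (j : Fin q) : eB p j (idxA q i) = 0 := by
  rw [eB, Pi.single_eq_of_ne (fun h => idxA_ne_idxB i j h)]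
@[simp] lemma eT_at_T : eT p q (idxT p q) = 1 := by rw [eT, Pi.single_eq_same]
@[simp] lemma eA_at_A (i : Fin p) : eA q i (idxA q i) = 1 := by rw [eA, Pi.single_eq_same]
@[simp] lemma eB_at_B (j : Fin q) : eB p j (idxB p j) = 1 := by rw [eB, Pi.single_eq_same]

lemma eA_at_A_cases (i i' : Fin p) : eA q i (idxA q i') = 1 ∧ i' = i ∨ eA q i (idxA q i') = 0 := by
  rcases eq_or_ne i' i with rfl | h
  · exact .inl ⟨by simp, rfl⟩
  · exact .inr (by rw [eA, Pi.single_eq_of_ne (fun hh => h (idxA_inj hh))])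
lemma eB_at_B_cases (j j' : Fin q) : eB p j (idxB p j') = 1 ∧ j' = j ∨ eB p j (idxB p j') = 0 := by
  rcases eq_or_ne j' j with rfl | h
  · exact .inl ⟨by simp, rfl⟩
  · exact .inr (by rw [eB, Pi.single_eq_of_ne (fun hh => h (idxB_inj hh))])

/-! ### Witness points -/

lemma zero_mem_Q : (0 : Fin (p+q+1) → ℝ) ∈ Q p q := by
  rw [mem_Q_iff]; norm_num

lemma zT_mem_Q : eT p q ∈ Q p q := by
  rw [mem_Q_iff]
  refine ⟨fun i => ⟨?_, ?_⟩, fun j => ⟨?_, ?_⟩, ?_, ?_⟩ <;> simp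

lemma zA_mem_Q (i : Fin p) : eA q i + eT p q ∈ Q p q := by
  rw [mem_Q_iff]
  refine ⟨fun i' => ?_, fun j => ⟨?_, ?_⟩, ?_, ?_⟩
  · rcases eA_at_A_cases (q := q) i i' with ⟨hv, rfl⟩ | hv <;> constructor <;> simp [hv]
  all_goals simp

lemma zB_mem_Q (j : Fin q) : eB p j ∈ Q p q := by
  rw [mem_Q_iff]
  refine ⟨fun i => ⟨?_, ?_⟩, fun j' => ?_, ?_, ?_⟩
  · simp
  · simp
  · rcases eB_at_B_cases (p := p) j j' with ⟨hv, rfl⟩ | hv <;> constructor <;> simp [hv]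
  all_goals simp

/-! ### The candidate facets -/

def Fface (j : J p q) : Set (Fin (p+q+1) → ℝ) := {z ∈ Q p q | dot (cvec j) z = cb j}

lemma exposed_Fface (j : J p q) : IsExposedFace (Q p q) (Fface j) :=
  ⟨fun z hz => hz.1, cvec j, cb j, fun y hy => hy j, rfl⟩

lemma Fface_nonempty (j : J p q) : (Fface j).Nonempty := by
  match j with
  | .inl (.inl i) =>
    exact ⟨0, zero_mem_Q, by obtain ⟨h, _⟩ := dot_cvec (p := p) (q := q) 0; rw [(h i).1]; simp [cb]⟩
  | .inl (.inr i) =>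
    exact ⟨0, zero_mem_Q, by obtain ⟨h, _⟩ := dot_cvec (p := p) (q := q) 0; rw [(h i).2]; simp [cb]⟩
  | .inr (.inl (.inl j)) =>
    exact ⟨0, zero_mem_Q, by obtain ⟨_, h, _⟩ := dot_cvec (p := p) (q := q) 0; rw [(h j).1]; simp [cb]⟩
  | .inr (.inl (.inr j)) =>
    refine ⟨eT p q, zT_mem_Q, ?_⟩
    obtain ⟨_, h, _⟩ := dot_cvec (p := p) (q := q) (eT p q)
    rw [(h j).2]; simp [cb]
  | .inr (.inr false) =>
    exact ⟨0, zero_mem_Q, by obtain ⟨_, _, h, _⟩ := dot_cvec (p := p) (q := q) 0; rw [h]; simp [cb]⟩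
  | .inr (.inr true) =>
    refine ⟨eT p q, zT_mem_Q, ?_⟩
    obtain ⟨_, _, _, h⟩ := dot_cvec (p := p) (q := q) (eT p q)
    rw [h]; simp [cb]

lemma exists_strict (j : J p q) : ∃ w ∈ Q p q, dot (cvec j) w < cb j := by
  match j with
  | .inl (.inl i) =>
    refine ⟨_, zA_mem_Q i, ?_⟩
    obtain ⟨h, _⟩ := dot_cvec (p := p) (q := q) (eA q i + eT p q)
    rw [(h i).1]; simp [cb]
  | .inl (.inr i) =>
    refine ⟨_, zT_mem_Q, ?_⟩
    obtain ⟨h, _⟩ := dot_cvec (p := p) (q := q) (eT p q)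
    rw [(h i).2]; simp [cb]
  | .inr (.inl (.inl j)) =>
    refine ⟨_, zB_mem_Q j, ?_⟩
    obtain ⟨_, h, _⟩ := dot_cvec (p := p) (q := q) (eB p j)
    rw [(h j).1]; simp [cb]
  | .inr (.inl (.inr j)) =>
    refine ⟨0, zero_mem_Q, ?_⟩
    obtain ⟨_, h, _⟩ := dot_cvec (p := p) (q := q) 0
    rw [(h j).2]; simp [cb]
  | .inr (.inr false) =>
    refine ⟨_, zT_mem_Q, ?_⟩
    obtain ⟨_, _, h, _⟩ := dot_cvec (p := p) (q := q) (eT p q)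
    rw [h]; simp [cb]
  | .inr (.inr true) =>
    refine ⟨0, zero_mem_Q, ?_⟩
    obtain ⟨_, _, _, h⟩ := dot_cvec (p := p) (q := q) 0
    rw [h]; simp [cb]

lemma Fface_ne (j : J p q) : Fface j ≠ Q p q := by
  obtain ⟨w, hwQ, hws⟩ := exists_strict j
  intro h
  have : w ∈ Fface j := h ▸ hwQ
  exact absurd this.2 (ne_of_lt hws)


/-! ### Every facet is one of the candidate faces -/

lemma strict_point (F : Set (Fin (p+q+1) → ℝ)) (hFQ : F ⊆ Q p q) (hFc : Convex ℝ F)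
    (hne : F.Nonempty) (h : ∀ j : J p q, ∃ z ∈ F, dot (cvec j) z < cb j) :
    ∃ z ∈ F, ∀ j : J p q, dot (cvec j) z < cb j := by
  suffices H : ∀ s : Finset (J p q), ∃ z ∈ F, ∀ j ∈ s, dot (cvec j) z < cb j by
    obtain ⟨z, hz, hs⟩ := H Finset.univ
    exact ⟨z, hz, fun j => hs j (Finset.mem_univ j)⟩
  intro s
  induction s using Finset.induction_on with
  | empty => obtain ⟨z, hz⟩ := hne; exact ⟨z, hz, by simp⟩
  | @insert j0 s hj0 ih =>
    obtain ⟨z, hzF, hzs⟩ := ih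
    obtain ⟨w, hwF, hw⟩ := h j0
    refine ⟨(1/2 : ℝ) • z + (1/2 : ℝ) • w,
      hFc hzF hwF (by norm_num) (by norm_num) (by norm_num), ?_⟩
    intro j hj
    have hval : dot (cvec j) ((1/2 : ℝ) • z + (1/2 : ℝ) • w)
        = (1/2) * dot (cvec j) z + (1/2) * dot (cvec j) w := by
      rw [dot_add_right, dot_smul_right, dot_smul_right]
    rw [hval]
    rcases Finset.mem_insert.1 hj with rfl | hj
    · have h1 : dot (cvec j) z ≤ cb j := hFQ hzF j
      linarith
    · have h1 : dot (cvec j) w ≤ cb j := hFQ hwF j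
      have h2 := hzs j hj
      linarith

lemma facet_mem_range {F : Set (Fin (p+q+1) → ℝ)} (hF : IsFacet (Q p q) F) :
    ∃ j : J p q, F = Fface j := by
  obtain ⟨⟨hFQ, c, α, hcle, hFeq⟩, hne, hneQ, hmax⟩ := hF
  by_contra hcon
  push_neg at hcon
  have hstrict : ∀ j : J p q, ∃ z ∈ F, dot (cvec j) z < cb j := by
    intro j
    by_contra h
    push_neg at h
    have htight : F ⊆ Fface j := fun z hz => ⟨hFQ hz, le_antisymm (hFQ hz j) (h z hz)⟩
    have := hmax (Fface j) (exposed_Fface j) (Set.Nonempty.mono htight hne) (Fface_ne j) htight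
    exact hcon j this.symm
  have hFc : Convex ℝ F := by
    rw [hFeq]
    intro x hx y hy a b ha hb hab
    refine ⟨convex_Q hx.1 hy.1 ha hb hab, ?_⟩
    have hx2 : dot c x = α := hx.2
    have hy2 : dot c y = α := hy.2
    show dot c (a • x + b • y) = α
    rw [dot_add_right, dot_smul_right, dot_smul_right, hx2, hy2, ← add_mul, hab, one_mul]
  obtain ⟨z, hzF, hzstrict⟩ := strict_point F hFQ hFc hne hstrict
  have hQF : Q p q ⊆ F := by
    intro w hw
    haveI : Nonempty (J p q) := ⟨.inr (.inr true)⟩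
    have hδpos : ∀ j : J p q,
        0 < (cb j - dot (cvec j) z) / (1 + |dot (cvec j) z - dot (cvec j) w|) :=
      fun j => div_pos (sub_pos.2 (hzstrict j)) (by positivity)
    set δ : J p q → ℝ :=
      fun j => (cb j - dot (cvec j) z) / (1 + |dot (cvec j) z - dot (cvec j) w|) with hδ
    set ε := Finset.univ.inf' Finset.univ_nonempty δ with hε
    have hεpos : 0 < ε := by
      rw [hε, Finset.lt_inf'_iff]
      exact fun j _ => hδpos j
    have hεle : ∀ j, ε ≤ δ j := fun j => Finset.inf'_le _ (Finset.mem_univ j)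
    have hzε : z + ε • (z - w) ∈ Q p q := by
      intro j
      have hdz := hzstrict j
      have hdw := hw j
      rw [dot_add_right, dot_smul_right, dot_sub_right]
      have hden : (0:ℝ) < 1 + |dot (cvec j) z - dot (cvec j) w| := by positivity
      have h1 : ε * (dot (cvec j) z - dot (cvec j) w)
          ≤ ε * |dot (cvec j) z - dot (cvec j) w| :=
        mul_le_mul_of_nonneg_left (le_abs_self _) hεpos.le
      have h2 : ε * |dot (cvec j) z - dot (cvec j) w|
          ≤ δ j * (1 + |dot (cvec j) z - dot (cvec j) w|) :=
        mul_le_mul (hεle j) (by linarith [abs_nonneg (dot (cvec j) z - dot (cvec j) w)])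
          (abs_nonneg _) (hδpos j).le
      have h3 : δ j * (1 + |dot (cvec j) z - dot (cvec j) w|) = cb j - dot (cvec j) z := by
        rw [hδ]
        exact div_mul_cancel₀ _ hden.ne'
      linarith
    have h1 : dot c (z + ε • (z - w)) ≤ α := hcle _ hzε
    have h2 : dot c z = α := by
      have := hzF; rw [hFeq] at this; exact this.2
    have h3 : dot c w ≤ α := hcle w hw
    rw [dot_add_right, dot_smul_right, dot_sub_right, h2] at h1
    have h5 : α - dot c w ≤ 0 := by
      have h6 : ε * (α - dot c w) ≤ ε * 0 := by linarith
      exact le_of_not_gt fun hlt => absurd h6 (not_le.2 (by nlinarith))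
    have h7 : dot c w = α := le_antisymm h3 (by linarith)
    rw [hFeq]
    exact ⟨hw, h7⟩
  exact hneQ (Set.Subset.antisymm hFQ hQF)


/-! ### Facet-count bound -/

lemma polySize_Q_le : polySize (Q p q) ≤ 2 * p + 2 * q + 2 := by
  have hsub : {F : Set (Fin (p+q+1) → ℝ) | IsFacet (Q p q) F}
      ⊆ Set.range (Fface (p := p) (q := q)) := by
    intro F hF
    obtain ⟨j, hj⟩ := facet_mem_range hF
    exact ⟨j, hj.symm⟩
  have h1 : polySize (Q p q) ≤ (Set.range (Fface (p := p) (q := q))).ncard :=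
    Set.ncard_le_ncard hsub (Set.finite_range _)
  have h2 : (Set.range (Fface (p := p) (q := q))).ncard ≤ Fintype.card (J p q) := by
    rw [← Set.image_univ]
    refine le_trans (Set.ncard_image_le Set.finite_univ) ?_
    rw [Set.ncard_univ, Nat.card_eq_fintype_card]
  have h3 : Fintype.card (J p q) = 2 * p + 2 * q + 2 := by
    simp [Fintype.card_sum]
    omega
  omega

/-! ### The cube and its corners -/

def corners (m : ℕ) : Set (Fin m → ℝ) := Set.pi Set.univ (fun _ => {0, 1})

lemma corners_finite (m : ℕ) : (corners m).Finite :=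
  Set.Finite.pi (fun _ => (Set.finite_singleton 1).insert 0)

lemma mem_convexHull_corners {m : ℕ} {x : Fin m → ℝ} (hx : ∀ i, 0 ≤ x i ∧ x i ≤ 1) :
    x ∈ convexHull ℝ (corners m) := by
  rw [corners, convexHull_pi]
  intro i _
  have h : convexHull ℝ ({0, 1} : Set ℝ) = Set.Icc 0 1 := by
    rw [convexHull_pair, segment_eq_Icc zero_le_one]
  rw [h]
  exact ⟨(hx i).1, (hx i).2⟩

/-! ### The lifting maps -/

def linA {p : ℕ} (q : ℕ) : (Fin p → ℝ) →ₗ[ℝ] (Fin (p+q+1) → ℝ) where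
  toFun x := fun k => if h : k.1 < p then x ⟨k.1, h⟩ else 0
  map_add' x y := by funext k; by_cases h : k.1 < p <;> simp [h]
  map_smul' r x := by funext k; by_cases h : k.1 < p <;> simp [h]

def linB (p : ℕ) {q : ℕ} : (Fin q → ℝ) →ₗ[ℝ] (Fin (p+q+1) → ℝ) where
  toFun y := fun k => if h : p ≤ k.1 ∧ k.1 < p + q then y ⟨k.1 - p, by omega⟩ else 0
  map_add' x y := by funext k; by_cases h : p ≤ k.1 ∧ k.1 < p + q <;> simp [h]
  map_smul' r x := by funext k; by_cases h : p ≤ k.1 ∧ k.1 < p + q <;> simp [h]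

@[simp] lemma linA_at_A (x : Fin p → ℝ) (i : Fin p) : linA q x (idxA q i) = x i := by
  simp [linA, idxA]
@[simp] lemma linA_at_B (x : Fin p → ℝ) (j : Fin q) : linA q x (idxB p j) = 0 := by
  have : ¬ ((idxB p j).1 < p) := by simp only [idxB_val]; omega
  simp [linA, this]
@[simp] lemma linA_at_T (x : Fin p → ℝ) : linA q x (idxT p q) = 0 := by
  have : ¬ ((idxT p q).1 < p) := by simp only [idxT_val]; omega
  simp [linA, this]
@[simp] lemma linB_at_A (y : Fin q → ℝ) (i : Fin p) : linB p y (idxA q i) = 0 := by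
  have : ¬ (p ≤ (idxA q i).1 ∧ (idxA q i).1 < p + q) := by
    simp only [idxA_val]; omega
  simp [linB, this]
@[simp] lemma linB_at_B (y : Fin q → ℝ) (j : Fin q) : linB p y (idxB p j) = y j := by
  have h : p ≤ (idxB p j).1 ∧ (idxB p j).1 < p + q := by
    simp only [idxB_val]; omega
  simp only [linB, LinearMap.coe_mk, AddHom.coe_mk, dif_pos h]
  congr 1
  exact Fin.ext (by simp [idxB])
@[simp] lemma linB_at_T (y : Fin q → ℝ) : linB p y (idxT p q) = 0 := by
  have : ¬ (p ≤ (idxT p q).1 ∧ (idxT p q).1 < p + q) := by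
    simp only [idxT_val]; omega
  simp [linB, this]

noncomputable def affA (p q : ℕ) : (Fin p → ℝ) →ᵃ[ℝ] (Fin (p+q+1) → ℝ) :=
  (linA q).toAffineMap + AffineMap.const ℝ (Fin p → ℝ) (eT p q)

lemma affA_apply (x : Fin p → ℝ) : affA p q x = linA q x + eT p q := rfl

/-! ### The vertex set -/

def Vset (p q : ℕ) : Set (Fin (p+q+1) → ℝ) :=
  (fun x => linA q x + eT p q) '' corners p ∪ (linB p) '' corners q

lemma Vset_finite : (Vset p q).Finite :=
  ((corners_finite p).image _).union ((corners_finite q).image _)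

lemma vA_mem_hull {x : Fin p → ℝ} (hx : ∀ i, 0 ≤ x i ∧ x i ≤ 1) :
    linA q x + eT p q ∈ convexHull ℝ (Vset p q) := by
  have h1 : x ∈ convexHull ℝ (corners p) := mem_convexHull_corners hx
  have h2 : linA q x + eT p q ∈ affA p q '' convexHull ℝ (corners p) := ⟨x, h1, rfl⟩
  rw [AffineMap.image_convexHull] at h2
  have h3 : (affA p q) '' corners p = (fun x => linA q x + eT p q) '' corners p := rfl
  rw [h3] at h2
  exact convexHull_mono Set.subset_union_left h2

lemma vB_mem_hull {y : Fin q → ℝ} (hy : ∀ j, 0 ≤ y j ∧ y j ≤ 1) :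
    linB p y ∈ convexHull ℝ (Vset p q) := by
  have h1 : y ∈ convexHull ℝ (corners q) := mem_convexHull_corners hy
  have h2 : linB p y ∈ (linB p) '' convexHull ℝ (corners q) := ⟨y, h1, rfl⟩
  rw [(linB p).image_convexHull] at h2
  exact convexHull_mono Set.subset_union_right h2

lemma mem_corners_iff {m : ℕ} (x : Fin m → ℝ) :
    x ∈ corners m ↔ ∀ i, x i = 0 ∨ x i = 1 := by
  simp [corners, Set.mem_pi]

/-! ### Q is a polytope with vertex set Vset -/

lemma Q_eq_hull : Q p q = convexHull ℝ (Vset p q) := by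
  apply Set.Subset.antisymm
  · intro z hz
    rw [mem_Q_iff] at hz
    obtain ⟨hA, hB, ht0, ht1⟩ := hz
    set t := z (idxT p q) with hT
    set xx : Fin p → ℝ := fun i => z (idxA q i) / t with hxx
    set yy : Fin q → ℝ := fun j => z (idxB p j) / (1 - t) with hyy
    have hxb : ∀ i, 0 ≤ xx i ∧ xx i ≤ 1 := by
      intro i
      refine ⟨div_nonneg (hA i).1 ht0, ?_⟩
      rcases eq_or_lt_of_le ht0 with h | h
      · show z (idxA q i) / t ≤ 1
        rw [← h, div_zero]; norm_num
      · exact div_le_one_of_le₀ (hA i).2 h.le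
    have hyb : ∀ j, 0 ≤ yy j ∧ yy j ≤ 1 := by
      intro j
      have h1t : 0 ≤ 1 - t := by linarith
      refine ⟨div_nonneg (hB j).1 h1t, ?_⟩
      rcases eq_or_lt_of_le h1t with h | h
      · show z (idxB p j) / (1 - t) ≤ 1
        rw [← h, div_zero]; norm_num
      · exact div_le_one_of_le₀ (by linarith [(hB j).2]) h.le
    have hu := vA_mem_hull (q := q) hxb
    have hw := vB_mem_hull (p := p) hyb
    have hcomb : z = t • (linA q xx + eT p q) + (1 - t) • linB p yy := by
      funext k
      rcases idx_cases k with ⟨i, rfl⟩ | ⟨j, rfl⟩ | rfl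
      · simp only [Pi.add_apply, Pi.smul_apply, linA_at_A, linB_at_A, eT_at_A, smul_eq_mul,
          mul_zero, add_zero]
        rcases eq_or_lt_of_le ht0 with h | h
        · have hz0 : z (idxA q i) = 0 := le_antisymm ((hA i).2.trans (le_of_eq h.symm)) (hA i).1
          rw [hz0, hxx]
          simp [hz0, ← hT]
        · rw [hxx]
          field_simp
      · simp only [Pi.add_apply, Pi.smul_apply, linA_at_B, linB_at_B, eT_at_B, smul_eq_mul,
          mul_zero, add_zero, zero_add]
        rcases eq_or_lt_of_le (by linarith : (0:ℝ) ≤ 1 - t) with h | h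
        · have hz0 : z (idxB p j) = 0 :=
            le_antisymm (by linarith [(hB j).2]) (hB j).1
          rw [hz0, hyy]
          simp [hz0]
        · rw [hyy]
          field_simp
      · simp only [Pi.add_apply, Pi.smul_apply, linA_at_T, linB_at_T, eT_at_T, smul_eq_mul,
          mul_zero, mul_one, add_zero, zero_add, ← hT]
    rw [hcomb]
    exact convex_convexHull ℝ (Vset p q) hu hw ht0 (by linarith) (by ring)
  · refine convexHull_min ?_ convex_Q
    rintro z (⟨x, hx, rfl⟩ | ⟨y, hy, rfl⟩)
    · rw [mem_corners_iff] at hx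
      have hb : ∀ i, 0 ≤ x i ∧ x i ≤ 1 := by
        intro i; rcases hx i with h | h <;> rw [h] <;> norm_num
      rw [mem_Q_iff]
      refine ⟨fun i => ⟨?_, ?_⟩, fun j => ⟨?_, ?_⟩, ?_, ?_⟩ <;>
        simp [(hb _).1, (hb _).2]
    · rw [mem_corners_iff] at hy
      have hb : ∀ j, 0 ≤ y j ∧ y j ≤ 1 := by
        intro j; rcases hy j with h | h <;> rw [h] <;> norm_num
      rw [mem_Q_iff]
      refine ⟨fun i => ⟨?_, ?_⟩, fun j => ⟨?_, ?_⟩, ?_, ?_⟩ <;>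
        simp [(hb _).1, (hb _).2]


/-! ### The projection -/

noncomputable def projMap (p q : ℕ) : (Fin (p+q+1) → ℝ) →ₗ[ℝ] (Fin p ⊕ Fin q → ℝ) :=
  LinearMap.pi (fun v => LinearMap.proj (Sum.elim (idxA q) (idxB p) v))

@[simp] lemma projMap_inl (z : Fin (p+q+1) → ℝ) (i : Fin p) :
    projMap p q z (Sum.inl i) = z (idxA q i) := rfl
@[simp] lemma projMap_inr (z : Fin (p+q+1) → ℝ) (j : Fin q) :
    projMap p q z (Sum.inr j) = z (idxB p j) := rfl

def stabSet (p q : ℕ) : Set (Fin p ⊕ Fin q → ℝ) :=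
  {x | ∃ S : Set (Fin p ⊕ Fin q),
    (∀ u ∈ S, ∀ v ∈ S, ¬ (completeBipartiteGraph (Fin p) (Fin q)).Adj u v) ∧
    x = S.indicator 1}

lemma image_Vset : projMap p q '' Vset p q = stabSet p q := by
  apply Set.Subset.antisymm
  · rintro _ ⟨z, hzV, rfl⟩
    rcases hzV with ⟨x, hx, rfl⟩ | ⟨y, hy, rfl⟩
    · rw [mem_corners_iff] at hx
      refine ⟨(Sum.inl '' {i | x i = 1} : Set (Fin p ⊕ Fin q)), ?_, ?_⟩
      · rintro u ⟨i, _, rfl⟩ v ⟨i', _, rfl⟩ hadj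
        simp at hadj
      · funext v
        rcases v with i | j
        · rcases hx i with h0 | h1
          · have hnm : (Sum.inl i : Fin p ⊕ Fin q) ∉ (Sum.inl '' {i | x i = 1} : Set (Fin p ⊕ Fin q)) := by
              rintro ⟨i', hi', he⟩
              rw [Sum.inl.injEq] at he
              subst he
              rw [hi'] at h0
              norm_num at h0
            rw [Set.indicator_of_notMem hnm]
            simpa using h0
          · have hm : (Sum.inl i : Fin p ⊕ Fin q) ∈ (Sum.inl '' {i | x i = 1} : Set (Fin p ⊕ Fin q)) := ⟨i, h1, rfl⟩
            rw [Set.indicator_of_mem hm]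
            simpa using h1
        · have hnm : (Sum.inr j : Fin p ⊕ Fin q) ∉ (Sum.inl '' {i | x i = 1} : Set (Fin p ⊕ Fin q)) := by
            rintro ⟨i', _, he⟩
            exact Sum.inl_ne_inr he
          rw [Set.indicator_of_notMem hnm]
          simp
    · rw [mem_corners_iff] at hy
      refine ⟨(Sum.inr '' {j | y j = 1} : Set (Fin p ⊕ Fin q)), ?_, ?_⟩
      · rintro u ⟨j, _, rfl⟩ v ⟨j', _, rfl⟩ hadj
        simp at hadj
      · funext v
        rcases v with i | j
        · have hnm : (Sum.inl i : Fin p ⊕ Fin q) ∉ (Sum.inr '' {j | y j = 1} : Set (Fin p ⊕ Fin q)) := by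
            rintro ⟨j', _, he⟩
            exact Sum.inr_ne_inl he
          rw [Set.indicator_of_notMem hnm]
          simp
        · rcases hy j with h0 | h1
          · have hnm : (Sum.inr j : Fin p ⊕ Fin q) ∉ (Sum.inr '' {j | y j = 1} : Set (Fin p ⊕ Fin q)) := by
              rintro ⟨j', hj', he⟩
              rw [Sum.inr.injEq] at he
              subst he
              rw [hj'] at h0
              norm_num at h0
            rw [Set.indicator_of_notMem hnm]
            simpa using h0
          · have hm : (Sum.inr j : Fin p ⊕ Fin q) ∈ (Sum.inr '' {j | y j = 1} : Set (Fin p ⊕ Fin q)) := ⟨j, h1, rfl⟩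
            rw [Set.indicator_of_mem hm]
            simpa using h1
  · rintro _ ⟨S, hstab, rfl⟩
    by_cases hr : ∃ j, Sum.inr j ∈ S
    · obtain ⟨j0, hj0⟩ := hr
      have hl : ∀ i, Sum.inl i ∉ S := fun i hi => hstab _ hi _ hj0 (by simp)
      set y : Fin q → ℝ := fun j => S.indicator 1 (Sum.inr j) with hy
      refine ⟨linB p y, Or.inr ⟨y, ?_, rfl⟩, ?_⟩
      · rw [mem_corners_iff]
        intro j
        rw [hy]
        by_cases h : Sum.inr j ∈ S
        · right; simp [Set.indicator_of_mem h]
        · left; simp [Set.indicator_of_notMem h]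
      · funext v
        rcases v with i | j
        · rw [projMap_inl, linB_at_A, Set.indicator_of_notMem (hl i)]
        · rw [projMap_inr, linB_at_B]
    · push_neg at hr
      have hl : ∀ j, Sum.inr j ∉ S := hr
      set x : Fin p → ℝ := fun i => S.indicator 1 (Sum.inl i) with hx
      refine ⟨linA q x + eT p q, Or.inl ⟨x, ?_, rfl⟩, ?_⟩
      · rw [mem_corners_iff]
        intro i
        rw [hx]
        by_cases h : Sum.inl i ∈ S
        · right; simp [Set.indicator_of_mem h]
        · left; simp [Set.indicator_of_notMem h]
      · funext v
        rcases v with i | j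
        · rw [projMap_inl]
          simp only [Pi.add_apply, linA_at_A, eT_at_A, add_zero]
          rfl
        · rw [projMap_inr]
          simp only [Pi.add_apply, linA_at_B, eT_at_B, add_zero]
          rw [Set.indicator_of_notMem (hl j)]

lemma proj_Q : projMap p q '' Q p q = stab (completeBipartiteGraph (Fin p) (Fin q)) := by
  rw [Q_eq_hull, (projMap p q).image_convexHull, image_Vset]
  rfl

end XC15

/-- for the complete bipartite graph `K_{p,q}`,
`xc (STAB K_{p,q}) ≤ 2p + 2q + 3`. -/
theorem xc_stab_completeBipartite (p q : ℕ) :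
    xc (stab (completeBipartiteGraph (Fin p) (Fin q))) ≤ 2 * p + 2 * q + 3 := by
  have hext : IsExtension (stab (completeBipartiteGraph (Fin p) (Fin q))) (XC15.Q p q) :=
    ⟨⟨XC15.Vset p q, XC15.Vset_finite, XC15.Q_eq_hull⟩, XC15.projMap p q, XC15.proj_Q⟩
  have hmem : polySize (XC15.Q p q) ∈ {r : ℕ | ∃ (k : ℕ) (Q : Set (Fin k → ℝ)),
      IsExtension (stab (completeBipartiteGraph (Fin p) (Fin q))) Q ∧ polySize Q = r} :=
    ⟨p + q + 1, XC15.Q p q, hext, rfl⟩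
  refine le_trans (Nat.sInf_le hmem) ?_
  exact le_trans XC15.polySize_Q_le (by omega)
end

section
/- If G is the complement of the disjoint union of p edges (i.e., the complement of a perfect matching on 2p vertices), then xc(STAB(G)) ≤ 4p + 1. -/
/-- The disjoint union of `p` edges: a perfect matching on `2p` vertices, with edges
exactly `{(i, false), (i, true)}` for `i ∈ [p]`. -/
def matchingGraph (p : ℕ) : SimpleGraph (Fin p × Bool) :=
  SimpleGraph.fromRel fun a b => a.1 = b.1

lemma facet_stdSimplex {κ : Type*} [Fintype κ] [DecidableEq κ] {F : Set (κ → ℝ)}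
    (hF : IsFacet (stdSimplex ℝ κ) F) :
    ∃ j, F = {y ∈ stdSimplex ℝ κ | y j = 0} := by
  obtain ⟨⟨hsub, c, α, hle, hFeq⟩, hne, hneq, hmax⟩ := hF
  -- each c i ≤ α
  have hcle : ∀ i, c i ≤ α := by
    intro i
    have := hle _ (ite_eq_mem_stdSimplex ℝ i)
    simpa [mul_ite, Finset.sum_ite_eq] using this
  -- find y in simplex not in F
  have hss : F ⊂ stdSimplex ℝ κ := hsub.ssubset_of_ne hneq
  obtain ⟨y, hyQ, hyF⟩ := Set.exists_of_ssubset hss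
  have hylt : ∑ i, c i * y i < α := by
    rcases lt_or_eq_of_le (hle y hyQ) with h | h
    · exact h
    · exact absurd (hFeq ▸ ⟨hyQ, h⟩) hyF
  have hsum : ∑ i, α * y i = α := by
    rw [← Finset.mul_sum, hyQ.2, mul_one]
  obtain ⟨j, _, hj⟩ := Finset.exists_lt_of_sum_lt
    (f := fun i => c i * y i) (g := fun i => α * y i) (by rw [hsum]; exact hylt)
  have hyj : 0 < y j := by
    rcases lt_or_eq_of_le (hyQ.1 j) with h | h
    · exact h
    · rw [← h] at hj; simp at hj
  have hcj : c j < α := lt_of_mul_lt_mul_right hj hyj.le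
  refine ⟨j, ?_⟩
  -- F ⊆ Fj
  have hFsub : F ⊆ {y ∈ stdSimplex ℝ κ | y j = 0} := by
    intro x hx
    rw [hFeq] at hx
    obtain ⟨hxQ, hxα⟩ := hx
    refine ⟨hxQ, ?_⟩
    have h0 : ∑ i, (α - c i) * x i = 0 := by
      have : ∑ i, α * x i = α := by rw [← Finset.mul_sum, hxQ.2, mul_one]
      simp [sub_mul, Finset.sum_sub_distrib, this, hxα]
    have hnn : ∀ i ∈ Finset.univ, 0 ≤ (α - c i) * x i := fun i _ =>
      mul_nonneg (by linarith [hcle i]) (hxQ.1 i)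
    have := (Finset.sum_eq_zero_iff_of_nonneg hnn).mp h0 j (Finset.mem_univ j)
    rcases mul_eq_zero.mp this with h | h
    · linarith
    · exact h
  -- Fj is an exposed face
  have hexp : IsExposedFace (stdSimplex ℝ κ) {y ∈ stdSimplex ℝ κ | y j = 0} := by
    refine ⟨fun y hy => hy.1, fun i => if i = j then -1 else 0, 0, ?_, ?_⟩
    · intro y hy
      simp only [ite_mul, neg_mul, one_mul, zero_mul, Finset.sum_ite_eq]
      simpa using hy.1 j
    · ext y
      simp only [Set.mem_setOf_eq, ite_mul, neg_mul, one_mul, zero_mul, Finset.sum_ite_eq]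
      simp [neg_eq_zero]
  have hFj_ne : ({y ∈ stdSimplex ℝ κ | y j = 0}).Nonempty := hne.mono hFsub
  have hFj_neq : {y ∈ stdSimplex ℝ κ | y j = 0} ≠ stdSimplex ℝ κ := by
    intro h
    have hmem : (fun i => if j = i then (1:ℝ) else 0) ∈ stdSimplex ℝ κ :=
      ite_eq_mem_stdSimplex ℝ j
    rw [← h] at hmem
    simpa using hmem.2
  exact (hmax _ hexp hFj_ne hFj_neq hFsub).symm

lemma xc_convexHull_range_le {V ι : Type*} [Fintype V] [Fintype ι]
    (f : ι → (V → ℝ)) :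
    xc (convexHull ℝ (Set.range f)) ≤ Fintype.card ι := by
  set k := Fintype.card ι with hk
  let σ : Fin k ≃ ι := (Fintype.equivFin ι).symm
  let f' : Fin k → (V → ℝ) := f ∘ σ
  let π : (Fin k → ℝ) →ₗ[ℝ] (V → ℝ) :=
    ∑ i : Fin k, (LinearMap.proj i : (Fin k → ℝ) →ₗ[ℝ] ℝ).smulRight (f' i)
  have hπb : ∀ (d : ∀ a b : Fin k, Decidable (a = b)) (i : Fin k),
      π (fun j => @ite ℝ (i = j) (d i j) 1 0) = f' i := by
    intro d i
    simp only [π, LinearMap.sum_apply, LinearMap.smulRight_apply, LinearMap.proj_apply]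
    rw [Finset.sum_eq_single i]
    · rw [if_pos rfl, one_smul]
    · intro b _ hb; rw [if_neg (Ne.symm hb), zero_smul]
    · simp
  have hpoly : IsPolytope (stdSimplex ℝ (Fin k)) :=
    ⟨_, Set.finite_range _, (convexHull_basis_eq_stdSimplex (ι := Fin k) (R := ℝ)).symm⟩
  have himg : π '' stdSimplex ℝ (Fin k) = convexHull ℝ (Set.range f) := by
    rw [← convexHull_basis_eq_stdSimplex (ι := Fin k) (R := ℝ), LinearMap.image_convexHull,
      ← Set.range_comp]
    simp only [Function.comp_def]
    congr 1
    exact (congrArg Set.range (funext (hπb _))).trans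
      (Function.Surjective.range_comp σ.surjective f)
  have hps : polySize (stdSimplex ℝ (Fin k)) ≤ k := by
    have hsub : {F : Set (Fin k → ℝ) | IsFacet (stdSimplex ℝ (Fin k)) F} ⊆
        Set.range (fun j => {y ∈ stdSimplex ℝ (Fin k) | y j = 0}) := by
      intro F hF
      obtain ⟨j, hj⟩ := facet_stdSimplex hF
      exact ⟨j, hj.symm⟩
    calc {F : Set (Fin k → ℝ) | IsFacet (stdSimplex ℝ (Fin k)) F}.ncard
        ≤ (Set.range (fun j => {y ∈ stdSimplex ℝ (Fin k) | y j = 0})).ncard :=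
          Set.ncard_le_ncard hsub (Set.finite_range _)
      _ ≤ k := by
          rw [← Set.image_univ]
          refine le_trans (Set.ncard_image_le Set.finite_univ) ?_
          simp [Set.ncard_univ]
  have hmem : polySize (stdSimplex ℝ (Fin k)) ∈
      {r : ℕ | ∃ (k' : ℕ) (Q : Set (Fin k' → ℝ)),
        IsExtension (convexHull ℝ (Set.range f)) Q ∧ polySize Q = r} :=
    ⟨k, stdSimplex ℝ (Fin k), ⟨hpoly, π, himg⟩, rfl⟩
  exact le_trans (Nat.sInf_le hmem) hps

/-- if `G` is the complement of the disjoint union of `p` edges (the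
complement of a perfect matching on `2p` vertices), then `xc (STAB G) ≤ 4p + 1`. -/
theorem xc_stab_compl_matching {V : Type*} [Fintype V] (G : SimpleGraph V) (p : ℕ)
    (hiso : Nonempty (G ≃g (matchingGraph p)ᶜ)) :
    xc (stab G) ≤ 4 * p + 1 := by
  obtain ⟨e⟩ := hiso
  have hadj : ∀ u v : V, ¬ G.Adj u v ↔ (e u).1 = (e v).1 := by
    intro u v
    rw [← e.map_adj_iff, SimpleGraph.compl_adj]
    unfold matchingGraph
    rw [SimpleGraph.fromRel_adj]
    by_cases h1 : e u = e v
    · grind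
    · simp only [h1, ne_eq, not_false_eq_true, true_and, not_and, not_not, forall_const]
      constructor
      · grind
      · grind
  classical
  let g : Option ((Fin p × Bool) ⊕ Fin p) → (V → ℝ) := fun t =>
    match t with
    | none => (∅ : Set V).indicator 1
    | some (Sum.inl w) => ({e.symm w} : Set V).indicator 1
    | some (Sum.inr i) =>
        ({e.symm (i, false), e.symm (i, true)} : Set V).indicator 1
  have hrange : Set.range g = {x : V → ℝ |
      ∃ S : Set V, (∀ u ∈ S, ∀ v ∈ S, ¬ G.Adj u v) ∧ x = S.indicator 1} := by
    apply Set.Subset.antisymm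
    · rintro x ⟨t, rfl⟩
      match t with
      | none => exact ⟨∅, by simp, rfl⟩
      | some (Sum.inl w) =>
          refine ⟨{e.symm w}, ?_, rfl⟩
          rintro u rfl v rfl
          exact G.irrefl
      | some (Sum.inr i) =>
          refine ⟨{e.symm (i, false), e.symm (i, true)}, ?_, rfl⟩
          intro u hu v hv
          rw [hadj]
          have h1 : (e u).1 = i := by
            rcases hu with rfl | rfl <;> rw [e.apply_symm_apply]
          have h2 : (e v).1 = i := by
            rcases hv with rfl | rfl <;> rw [e.apply_symm_apply]
          rw [h1, h2]
    · rintro x ⟨S, hS, rfl⟩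
      have hcoord : ∀ u ∈ S, ∀ v ∈ S, (e u).1 = (e v).1 := fun u hu v hv =>
        (hadj u v).mp (hS u hu v hv)
      rcases S.eq_empty_or_nonempty with rfl | ⟨u, hu⟩
      · exact ⟨none, rfl⟩
      by_cases hS1 : ∀ v ∈ S, v = u
      · have hSu : S = {u} := Set.eq_singleton_iff_unique_mem.mpr ⟨hu, hS1⟩
        exact ⟨some (Sum.inl (e u)), by rw [hSu]; simp only [g, e.symm_apply_apply]⟩
      push_neg at hS1
      obtain ⟨v, hv, hvu⟩ := hS1
      refine ⟨some (Sum.inr (e u).1), ?_⟩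
      have hne : e v ≠ e u := fun h => hvu (e.toEquiv.injective h)
      have h1 : (e v).1 = (e u).1 := hcoord v hv u hu
      have h2 : (e v).2 ≠ (e u).2 := by
        intro h
        exact hne (Prod.ext h1 h)
      have hpair : S = {e.symm ((e u).1, false), e.symm ((e u).1, true)} := by
        ext w
        constructor
        · intro hw
          have hwc : (e w).1 = (e u).1 := hcoord w hw u hu
          have hew : e w = ((e u).1, (e w).2) := Prod.ext hwc rfl
          have := congrArg e.symm hew
          rw [e.symm_apply_apply] at this
          rcases Bool.eq_false_or_eq_true (e w).2 with hb | hb <;> rw [hb] at this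
          · exact Or.inr (this ▸ rfl)
          · exact Or.inl (this ▸ rfl)
        · intro hw
          have key : ∀ b : Bool, e.symm ((e u).1, b) ∈ S := by
            intro b
            by_cases hb : b = (e u).2
            · have hx : ((e u).1, b) = e u := Prod.ext rfl hb
              rw [hx, e.symm_apply_apply]
              exact hu
            · have hbv : b = (e v).2 := by
                have hd : ∀ a b c : Bool, b ≠ a → c ≠ a → b = c := by decide
                exact hd (e u).2 b (e v).2 hb h2
              have hx : ((e u).1, b) = e v := Prod.ext h1.symm hbv
              rw [hx, e.symm_apply_apply]
              exact hv
          rcases hw with rfl | rfl <;> exact key _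
      refine hpair ▸ ?_
      rfl
  have hcard : Fintype.card (Option ((Fin p × Bool) ⊕ Fin p)) = 3 * p + 1 := by
    simp [Fintype.card_option, Fintype.card_sum, Fintype.card_prod]
    ring
  have := xc_convexHull_range_le g
  rw [hrange, hcard] at this
  have hstab : stab G = convexHull ℝ {x : V → ℝ |
      ∃ S : Set V, (∀ u ∈ S, ∀ v ∈ S, ¬ G.Adj u v) ∧ x = S.indicator 1} := rfl
  rw [hstab]
  omega
end
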